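/- arXiv:1610.09207 — 2 statements merged into one kernel-verified Lean document; each statement's English description precedes it below -/
import Mathlib

section
/- If ε = 1 in the bilinear form a, then for any τ > 0 the form a is elliptic on V_h with constant α = 1/(1 + C_max²): for all (v_h, ṽ_h) ∈ V_h one has a((v_h,ṽ_h),(v_h,ṽ_h)) ≥ α |||(v_h,ṽ_h)|||². -/
open MeasureTheory RealInnerProductSpace

noncomputable section

/-! ## Basic geometric and functional analytic framework -/

/-- The Euclidean plane `ℝ²`. -/
abbrev E2 : Type := EuclideanSpace ℝ (Fin 2)

/-- The `i`-th standard basis vector of `ℝ²`. -/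
def e2 (i : Fin 2) : E2 := EuclideanSpace.single i 1

/-- Rotation of a vector by `π/2` (used to produce normal vectors). -/
def rot90 (v : E2) : E2 := EuclideanSpace.single 0 (-(v 1)) + EuclideanSpace.single 1 (v 0)

/-- A (possibly degenerate-free) triangle in the plane, given by its three
affinely independent vertices. -/
structure Tri : Type where
  V : Fin 3 → E2
  indep : AffineIndependent ℝ V

namespace Tri

/-- The closed triangle, as a subset of the plane. -/
def toSet (K : Tri) : Set E2 := convexHull ℝ (Set.range K.V)

/-- `h_K`, the diameter of the triangle `K`. -/
def diam (K : Tri) : ℝ := Metric.diam K.toSet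

/-- The radius of the largest ball inscribed in `K`. -/
def inradius (K : Tri) : ℝ := sSup {r : ℝ | ∃ x : E2, Metric.ball x r ⊆ K.toSet}

/-- The closed edge of `K` opposite to the vertex `i`. -/
def edge (K : Tri) (i : Fin 3) : Set E2 := segment ℝ (K.V (i + 1)) (K.V (i + 2))

/-- The relatively open edge of `K` opposite to the vertex `i`
(the edge without its two endpoints). -/
def edgeO (K : Tri) (i : Fin 3) : Set E2 := K.edge i \ {K.V (i + 1), K.V (i + 2)}

end Tri

/-- Lexicographic positivity of a vector; used to fix a canonical orientation of edges. -/
def lexPos (v : E2) : Prop := 0 < v 0 ∨ (v 0 = 0 ∧ 0 < v 1)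

open Classical in
/-- A canonical unit tangent vector of the segment `[a, b]`,
independent of the order in which the endpoints are given. -/
def canonTangent (a b : E2) : E2 :=
  if lexPos (b - a) then ‖b - a‖⁻¹ • (b - a) else ‖a - b‖⁻¹ • (a - b)

namespace Tri

/-- The unit tangent vector `t` of the edge `i` of `K`. -/
def tangent (K : Tri) (i : Fin 3) : E2 := canonTangent (K.V (i + 1)) (K.V (i + 2))

open Classical in
/-- The outward unit normal vector `n` of the edge `i` of `K`
(one has `n ⬝ t = 0`). -/
def normal (K : Tri) (i : Fin 3) : E2 :=
  if 0 < ⟪‖rot90 (K.V (i + 2) - K.V (i + 1))‖⁻¹ • rot90 (K.V (i + 2) - K.V (i + 1)),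
        K.V i - K.V (i + 1)⟫ then
    -(‖rot90 (K.V (i + 2) - K.V (i + 1))‖⁻¹ • rot90 (K.V (i + 2) - K.V (i + 1)))
  else
    ‖rot90 (K.V (i + 2) - K.V (i + 1))‖⁻¹ • rot90 (K.V (i + 2) - K.V (i + 1))

end Tri

/-- Shape regularity of a triangle with parameter `ρ`: the triangle of a shape-regular
family satisfy `ρ h_K ≤ r_K`, where `r_K` is the inradius. -/
def ShapeRegular (ρ : ℝ) (K : Tri) : Prop := ρ * K.diam ≤ K.inradius

/-- `f` coincides on `S` with a (bivariate) polynomial of total degree at most `d`,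
i.e. `f|_S ∈ P_d(S)`. -/
def IsPolyOn (d : ℕ) (S : Set E2) (f : E2 → ℝ) : Prop :=
  ∃ p : MvPolynomial (Fin 2) ℝ, p.totalDegree ≤ d ∧
    ∀ x ∈ S, f x = MvPolynomial.eval (fun i => x i) p

/-- Vector-valued version of `IsPolyOn`: `v|_S ∈ [P_d(S)]²`. -/
def IsPolyVecOn (d : ℕ) (S : Set E2) (v : E2 → E2) : Prop :=
  ∀ c : Fin 2, IsPolyOn d S (fun x => v x c)

/-- The partial derivative (within `S`) in the `i`-th coordinate direction. -/
def dWi (S : Set E2) (i : Fin 2) (f : E2 → ℝ) : E2 → ℝ :=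
  fun x => fderivWithin ℝ f S x (e2 i)

/-- The iterated partial derivative `∂₀^j ∂₁^l` (within `S`). -/
def pderivW (S : Set E2) (j l : ℕ) (f : E2 → ℝ) : E2 → ℝ :=
  (dWi S 0)^[j] ((dWi S 1)^[l] f)

/-- The squared Sobolev seminorm `|f|²_{H^m(S)} = ∑_{|α| = m} ‖∂^α f‖²_{L²(S)}`. -/
def sobSemiSq (m : ℕ) (S : Set E2) (f : E2 → ℝ) : ℝ :=
  ∑ j ∈ Finset.range (m + 1), ∫ x in S, (pderivW S j (m - j) f x) ^ 2

/-- The Sobolev seminorm `|f|_{H^m(S)}`. -/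
def sobSemi (m : ℕ) (S : Set E2) (f : E2 → ℝ) : ℝ := Real.sqrt (sobSemiSq m S f)

/-- The squared Sobolev seminorm of a vector field, `|v|²_{H^m(S)}`. -/
def sobSemiVecSq (m : ℕ) (S : Set E2) (v : E2 → E2) : ℝ :=
  ∑ c : Fin 2, sobSemiSq m S (fun x => v x c)

/-- The Sobolev seminorm of a vector field, `|v|_{H^m(S)}`. -/
def sobSemiVec (m : ℕ) (S : Set E2) (v : E2 → E2) : ℝ := Real.sqrt (sobSemiVecSq m S v)

/-- Squared `L²(S)` norm. -/
def l2Sq (S : Set E2) (f : E2 → ℝ) : ℝ := ∫ x in S, (f x) ^ 2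

/-- `L²(S)` norm. -/
def l2N (S : Set E2) (f : E2 → ℝ) : ℝ := Real.sqrt (l2Sq S f)

/-- Squared `L²(S)` norm of a vector field. -/
def l2VecSq (S : Set E2) (v : E2 → E2) : ℝ := ∫ x in S, ‖v x‖ ^ 2

/-- `L²(S)` norm of a vector field. -/
def l2VecN (S : Set E2) (v : E2 → E2) : ℝ := Real.sqrt (l2VecSq S v)

/-- The full Sobolev norm `‖f‖_{H^m(S)}`. -/
def hmNorm (m : ℕ) (S : Set E2) (f : E2 → ℝ) : ℝ :=
  Real.sqrt (∑ j ∈ Finset.range (m + 1), sobSemiSq j S f)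

/-- The full Sobolev norm `‖v‖_{H^m(S)}` of a vector field. -/
def hmNormVec (m : ℕ) (S : Set E2) (v : E2 → E2) : ℝ :=
  Real.sqrt (∑ j ∈ Finset.range (m + 1), sobSemiVecSq j S v)

/-- The squared `L²(∂K)` norm: the boundary of a triangle is the union of its three edges,
and carries the one-dimensional Hausdorff (arc-length) measure. -/
def bdrySq (K : Tri) (f : E2 → ℝ) : ℝ :=
  ∑ i : Fin 3, ∫ x in K.edge i, (f x) ^ 2 ∂(μH[1])

/-- The `L²(∂K)` norm. -/
def bdryN (K : Tri) (f : E2 → ℝ) : ℝ := Real.sqrt (bdrySq K f)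

/-! ## Projection and interpolation operators -/

open Classical in
/-- The `L²(S, μ)`-orthogonal projection onto polynomials of degree at most `d` on `S`,
characterised by the orthogonality relation `∫_S (f - Pf) q dμ = 0` for all `q ∈ P_d(S)`. -/
def l2Proj (d : ℕ) (S : Set E2) (μ : Measure E2) (f : E2 → ℝ) : E2 → ℝ :=
  Classical.epsilon fun g => IsPolyOn d S g ∧
    ∀ q : E2 → ℝ, IsPolyOn d S q → ∫ x in S, (f x - g x) * q x ∂μ = 0

/-- The `L²(E)`-orthogonal projection `Φ^d_E` onto `P_d(E)` on an edge `E`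
(with respect to the arc-length measure). -/
def edgeProj (d : ℕ) (E : Set E2) (f : E2 → ℝ) : E2 → ℝ := l2Proj d E μH[1] f

/-- The local `L²(K)`-orthogonal projection `Ψ^d_K` onto `P_d(K)`. -/
def elemProj (d : ℕ) (K : Tri) (f : E2 → ℝ) : E2 → ℝ := l2Proj d K.toSet volume f

/-- Gradient within `S`. -/
def gradW (S : Set E2) (f : E2 → ℝ) (x : E2) : E2 := ∑ i : Fin 2, dWi S i f x • e2 i

/-- Divergence within `S`. -/
def divW (S : Set E2) (v : E2 → E2) (x : E2) : ℝ :=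
  ∑ i : Fin 2, ⟪fderivWithin ℝ v S x (e2 i), e2 i⟫

open Classical in
/-- The canonical local Brezzi-Douglas-Marini interpolation operator `Π^k` on a
triangle `K`, characterised by its degrees of freedom: `Π^k v ∈ [P_k(K)]²` with
* matching moments of the normal component against `P_k(E)` on every edge `E`;
* matching interior moments against gradients of `P_{k-1}(K)`;
* matching interior moments against divergence-free fields in `[P_k(K)]²` whose
  normal component vanishes on `∂K`. -/
def bdmInterp (k : ℕ) (K : Tri) (v : E2 → E2) : E2 → E2 :=
  Classical.epsilon fun w => IsPolyVecOn k Set.univ w ∧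
    (∀ i : Fin 3, ∀ q : E2 → ℝ, IsPolyOn k Set.univ q →
      ∫ x in K.edge i, ⟪w x - v x, K.normal i⟫ * q x ∂(μH[1]) = 0) ∧
    (∀ q : E2 → ℝ, IsPolyOn (k - 1) Set.univ q →
      ∫ x in K.toSet, ⟪w x - v x, gradW Set.univ q x⟫ = 0) ∧
    (∀ z : E2 → E2, IsPolyVecOn k Set.univ z → (∀ x : E2, divW Set.univ z x = 0) →
      (∀ i : Fin 3, ∀ x ∈ K.edge i, ⟪z x, K.normal i⟫ = 0) →
      ∫ x in K.toSet, ⟪w x - v x, z x⟫ = 0)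

/-! ## Triangulations, discrete spaces, bilinear forms and mesh-dependent norms -/

/-- A conforming triangulation `T_h` of a bounded open polygonal domain `Ω ⊂ ℝ²`. -/
structure Mesh : Type where
  /-- the computational domain `Ω` -/
  Ω : Set E2
  /-- the triangles of the triangulation -/
  T : Finset Tri
  isOpen_Ω : IsOpen Ω
  nonempty_Ω : Ω.Nonempty
  bounded_Ω : Bornology.IsBounded Ω
  connected_Ω : IsConnected Ω
  /-- the triangles cover the closure of `Ω` -/
  cover : (⋃ K ∈ T, Tri.toSet K) = closure Ω
  /-- distinct triangles have disjoint interiors -/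
  disjoint_interiors : ∀ K ∈ T, ∀ K' ∈ T, K ≠ K' →
    interior (Tri.toSet K) ∩ interior (Tri.toSet K') = ∅
  /-- the triangulation is conforming: two distinct triangles intersect in nothing,
  a common vertex, or a common (full) edge -/
  conforming : ∀ K ∈ T, ∀ K' ∈ T, K ≠ K' →
    (Tri.toSet K ∩ Tri.toSet K' = ∅) ∨
    (∃ a : E2, Tri.toSet K ∩ Tri.toSet K' = {a} ∧ a ∈ Set.range K.V ∧ a ∈ Set.range K'.V) ∨
    (∃ i j, Tri.toSet K ∩ Tri.toSet K' = Tri.edge K i ∧ Tri.edge K i = Tri.edge K' j)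
  /-- every edge either lies on the boundary `Γ = ∂Ω`, or is shared with exactly
  one other triangle -/
  edge_dichotomy : ∀ K ∈ T, ∀ i : Fin 3,
    Tri.edge K i ⊆ frontier Ω ∨
    ∃ K' ∈ T, K' ≠ K ∧ ∃ j : Fin 3, Tri.edge K' j = Tri.edge K i

/-- A broken (elementwise) vector field: the discrete velocities and the broken
Sobolev functions are represented by their restrictions to each element. -/
abbrev Vb : Type := Tri → E2 → E2

/-- Membership in the Brezzi-Douglas-Marini space
`BDM_h^k = {v ∈ H(div, Ω) : v|_K ∈ [P_k(K)]² ∀ K ∈ T_h}`: each piece is a polynomial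
of degree at most `k` and the normal component is continuous across interelement
edges (which is equivalent to `H(div)`-conformity for piecewise polynomials). -/
def MemBDM (M : Mesh) (k : ℕ) (v : Vb) : Prop :=
  (∀ K ∈ M.T, IsPolyVecOn k (Tri.toSet K) (v K)) ∧
  (∀ K ∈ M.T, ∀ K' ∈ M.T, ∀ i j, Tri.edge K i = Tri.edge K' j →
    ∀ x ∈ Tri.edge K i, ⟪v K x, Tri.normal K i⟫ = ⟪v K' x, Tri.normal K i⟫)

/-- Membership in the Lagrange multiplier space
`M_h^d = {g ∈ L²(E_h) : g|_E ∈ P_d(E) ∀ E ∈ E_h}` (the multiplier lives on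
the skeleton; the values at the finitely many vertices are irrelevant). -/
def MemM (M : Mesh) (d : ℕ) (g : E2 → ℝ) : Prop :=
  ∀ K ∈ M.T, ∀ i : Fin 3, IsPolyOn d (Tri.edgeO K i) g

/-- Membership in `M_{h,0}^d = {g ∈ M_h^d : g = 0 on Γ}`. -/
def MemM0 (M : Mesh) (d : ℕ) (g : E2 → ℝ) : Prop :=
  MemM M d g ∧ ∀ x ∈ frontier M.Ω, g x = 0

/-- Membership in the (discontinuous) pressure space
`Q_h^d = {q ∈ L²(Ω) : q|_K ∈ P_d(K) ∀ K ∈ T_h}`. -/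
def MemQ (M : Mesh) (d : ℕ) (q : E2 → ℝ) : Prop :=
  ∀ K ∈ M.T, IsPolyOn d (interior (Tri.toSet K)) q

/-- `f ∈ L²(S)`. -/
def MemL2 (S : Set E2) (f : E2 → ℝ) : Prop := MemLp f 2 (volume.restrict S)

/-- `v ∈ [L²(S)]²`. -/
def MemL2Vec (S : Set E2) (v : E2 → E2) : Prop := MemLp v 2 (volume.restrict S)

/-- `g ∈ L²(E_h)`: square integrable on every edge of the triangulation. -/
def MemL2Edges (M : Mesh) (g : E2 → ℝ) : Prop :=
  ∀ K ∈ M.T, ∀ i : Fin 3, MemLp g 2 (μH[1].restrict (Tri.edge K i))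

/-- `g ∈ L²(Γ)`. -/
def MemL2Bdry (M : Mesh) (g : E2 → ℝ) : Prop :=
  MemLp g 2 (μH[1].restrict (frontier M.Ω))

/-- A broken vector field in `[H¹(Ω) ∩ H^m(T_h)]²` (strong form): each piece has
`m` continuous derivatives up to the boundary of its element, and the pieces agree
on interelement boundaries (`H¹(Ω)`-conformity). -/
def MemH1Hm (M : Mesh) (m : ℕ) (u : Vb) : Prop :=
  (∀ K ∈ M.T, ∀ c : Fin 2, ContDiffOn ℝ m (fun x => u K x c) (Tri.toSet K)) ∧
  (∀ K ∈ M.T, ∀ K' ∈ M.T, ∀ x ∈ Tri.toSet K ∩ Tri.toSet K', u K x = u K' x)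

/-- The tangential component `(v)_t` of `v` on the edge `i` of `K`. -/
def tComp (K : Tri) (i : Fin 3) (v : E2 → E2) : E2 → ℝ := fun x => ⟪v x, K.tangent i⟫

/-- The tangential component `(∂_n v)_t` of the normal derivative of `v`
on the edge `i` of `K` (the trace is taken from inside `K`). -/
def dnt (K : Tri) (i : Fin 3) (v : E2 → E2) : E2 → ℝ :=
  fun x => ⟪fderivWithin ℝ v (Tri.toSet K) x (K.normal i), K.tangent i⟫

/-- The hdG velocity bilinear form `a((w, w̃), (v, ṽ))` with viscosity `ν`,
stabilisation parameter `τ` and symmetry parameter `ε ∈ {-1, 1}`. -/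
def aForm (M : Mesh) (k : ℕ) (ν τ ε : ℝ) (w : Vb) (wt : E2 → ℝ) (v : Vb) (vt : E2 → ℝ) : ℝ :=
  ∑ K ∈ M.T,
    ((∫ x in Tri.toSet K, ν * ∑ c : Fin 2,
        ⟪fderivWithin ℝ (w K) (Tri.toSet K) x (e2 c),
          fderivWithin ℝ (v K) (Tri.toSet K) x (e2 c)⟫)
      - ∑ i : Fin 3, ∫ x in Tri.edge K i,
          ν * dnt K i (w K) x * (tComp K i (v K) x - vt x) ∂(μH[1])
      + ε * ∑ i : Fin 3, ∫ x in Tri.edge K i,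
          ν * (tComp K i (w K) x - wt x) * dnt K i (v K) x ∂(μH[1])
      + ν * (τ / K.diam) * ∑ i : Fin 3, ∫ x in Tri.edge K i,
          edgeProj (k - 1) (Tri.edge K i) (fun y => tComp K i (w K) y - wt y) x *
            edgeProj (k - 1) (Tri.edge K i) (fun y => tComp K i (v K) y - vt y) x ∂(μH[1]))

/-- The hdG pressure-velocity bilinear form `b((v, ṽ), q) = -∑_K ∫_K q ∇⬝v`. -/
def bForm (M : Mesh) (v : Vb) (q : E2 → ℝ) : ℝ :=
  - ∑ K ∈ M.T, ∫ x in Tri.toSet K, q x * divW (Tri.toSet K) (v K) x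

/-- The squared mesh-dependent norm
`|||(w, w̃)|||² = ν ∑_K (|w|²_{H¹(K)} + h_K ‖∂_n w‖²_{∂K} + (τ/h_K) ‖Φ^{k-1}((w)_t - w̃)‖²_{∂K})`. -/
def tnormSq (M : Mesh) (k : ℕ) (ν τ : ℝ) (w : Vb) (wt : E2 → ℝ) : ℝ :=
  ν * ∑ K ∈ M.T,
    (sobSemiVecSq 1 (Tri.toSet K) (w K)
      + K.diam * ∑ i : Fin 3, ∫ x in Tri.edge K i,
          ‖fderivWithin ℝ (w K) (Tri.toSet K) x (K.normal i)‖ ^ 2 ∂(μH[1])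
      + (τ / K.diam) * ∑ i : Fin 3, ∫ x in Tri.edge K i,
          (edgeProj (k - 1) (Tri.edge K i) (fun y => tComp K i (w K) y - wt y) x) ^ 2 ∂(μH[1]))

/-- The mesh-dependent norm `|||(w, w̃)|||`. -/
def tnorm (M : Mesh) (k : ℕ) (ν τ : ℝ) (w : Vb) (wt : E2 → ℝ) : ℝ :=
  Real.sqrt (tnormSq M k ν τ w wt)

/-- The full triple norm `|||(w, w̃, r)|||_h = |||(w, w̃)||| + ν^{-1/2} ‖r‖_{L²(Ω)}`. -/
def tnormH (M : Mesh) (k : ℕ) (ν τ : ℝ) (w : Vb) (wt : E2 → ℝ) (r : E2 → ℝ) : ℝ :=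
  tnorm M k ν τ w wt + (Real.sqrt ν)⁻¹ * l2N M.Ω r

/-- `Cmax` is a constant for the discrete trace inequality
`h_K^{1/2} ‖p‖_{L²(∂K)} ≤ Cmax ‖p‖_{L²(K)}` for polynomials `p` of degree ≤ `k`
on the elements of the mesh `M`. -/
def TraceConst (M : Mesh) (k : ℕ) (Cmax : ℝ) : Prop :=
  0 < Cmax ∧ ∀ K ∈ M.T, ∀ f : E2 → ℝ, IsPolyOn k Set.univ f →
    Real.sqrt K.diam * bdryN K f ≤ Cmax * l2N (Tri.toSet K) f

/-- The global BDM interpolation operator, acting elementwise. -/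
def meshBDM (M : Mesh) (k : ℕ) (v : E2 → E2) : Vb := fun K => bdmInterp k K v

/-- The mesh size `h = max_K h_K`. -/
def meshSize (M : Mesh) : ℝ := sSup (Tri.diam '' (M.T : Set Tri))

/-- The broken Sobolev norm `‖u‖_{H^m(T_h)}` of a broken vector field. -/
def brokenNormVec (M : Mesh) (m : ℕ) (u : Vb) : ℝ :=
  Real.sqrt (∑ K ∈ M.T, ∑ j ∈ Finset.range (m + 1), sobSemiVecSq j (Tri.toSet K) (u K))

/-- The broken Sobolev norm `‖p‖_{H^m(T_h)}` of a scalar function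
(the pressure may jump across edges, so each piece is measured on the open element). -/
def brokenNorm (M : Mesh) (m : ℕ) (p : E2 → ℝ) : ℝ :=
  Real.sqrt (∑ K ∈ M.T, ∑ j ∈ Finset.range (m + 1), sobSemiSq j (interior (Tri.toSet K)) p)

/-! ### Auxiliary lemmas for the ellipticity proof -/

section EllAux

open MvPolynomial in
/-- Evaluation of a bivariate polynomial on `ℝ²`. -/
def pev (p : MvPolynomial (Fin 2) ℝ) (x : E2) : ℝ := MvPolynomial.eval (fun i => x i) p

/-- The total derivative of `pev p`, as a continuous linear map. -/
def pD (p : MvPolynomial (Fin 2) ℝ) (x : E2) : E2 →L[ℝ] ℝ :=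
  ∑ i : Fin 2, pev ((MvPolynomial.pderiv i) p) x • PiLp.proj 2 (fun _ : Fin 2 => ℝ) i

lemma pD_apply (p : MvPolynomial (Fin 2) ℝ) (x u : E2) :
    pD p x u = ∑ i : Fin 2, pev ((MvPolynomial.pderiv i) p) x * u i := by
  simp [pD]

lemma continuous_pev (p : MvPolynomial (Fin 2) ℝ) : Continuous (pev p) :=
  (MvPolynomial.continuous_eval p).comp (PiLp.continuousLinearEquiv 2 ℝ _).continuous

lemma hasFDerivAt_pev (p : MvPolynomial (Fin 2) ℝ) (x : E2) :
    HasFDerivAt (pev p) (pD p x) x := by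
  induction p using MvPolynomial.induction_on with
  | C a =>
      have h1 : pev (MvPolynomial.C a) = fun _ : E2 => a := by ext y; simp [pev]
      have h2 : pD (MvPolynomial.C a) x = 0 := by simp [pD, pev]
      rw [h1, h2]
      exact hasFDerivAt_const a x
  | add p q hp hq =>
      have h2 : pev (p + q) = fun y => pev p y + pev q y := by ext y; simp [pev]
      have h1 : pD (p + q) x = pD p x + pD q x := by
        simp [pD, pev, Finset.sum_add_distrib, add_smul]
      rw [h1, h2]
      exact hp.add hq
  | mul_X p i hp =>
      have h2 : pev (p * MvPolynomial.X i) = fun y => pev p y * y i := by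
        ext y; simp [pev]
      have hXi : HasFDerivAt (fun y : E2 => y i)
          ((PiLp.proj 2 (fun _ : Fin 2 => ℝ) i : E2 →L[ℝ] ℝ)) x := by
        exact (PiLp.proj 2 (fun _ : Fin 2 => ℝ) i : E2 →L[ℝ] ℝ).hasFDerivAt
      have key := hp.mul' hXi
      rw [h2]
      refine key.congr_fderiv ?_
      ext u
      simp only [pD, pev, map_mul, MvPolynomial.pderiv_X, ContinuousLinearMap.add_apply,
        ContinuousLinearMap.smul_apply, ContinuousLinearMap.sum_apply, PiLp.proj_apply,
        ContinuousLinearMap.coe_smul', Pi.smul_apply, smul_eq_mul]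
      rw [Fin.sum_univ_two, Fin.sum_univ_two]
      fin_cases i <;>
        simp [MvPolynomial.pderiv_X, Pi.single_apply, pev] <;> ring

lemma totalDegree_pderiv_le (i : Fin 2) (p : MvPolynomial (Fin 2) ℝ) :
    (MvPolynomial.pderiv i p).totalDegree ≤ p.totalDegree := by
  classical
  conv_lhs => rw [p.as_sum]
  rw [map_sum]
  refine (MvPolynomial.totalDegree_finset_sum _ _).trans (Finset.sup_le fun m hm => ?_)
  rw [MvPolynomial.pderiv_monomial]
  refine (MvPolynomial.totalDegree_monomial_le _ _).trans ?_
  refine le_trans ?_ (MvPolynomial.le_totalDegree hm)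
  have h1 : ∀ a : Fin 2, (m - (Finsupp.single i 1 : Fin 2 →₀ ℕ)) a ≤ m a := by
    intro a; rw [Finsupp.tsub_apply]; exact tsub_le_self
  calc (m - (Finsupp.single i 1 : Fin 2 →₀ ℕ)).sum (fun _ e => e)
      = ∑ a ∈ (m - (Finsupp.single i 1 : Fin 2 →₀ ℕ)).support,
          (m - (Finsupp.single i 1 : Fin 2 →₀ ℕ)) a := rfl
    _ ≤ ∑ a ∈ (m - (Finsupp.single i 1 : Fin 2 →₀ ℕ)).support, m a :=
        Finset.sum_le_sum fun a _ => h1 a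
    _ ≤ ∑ a ∈ m.support, m a :=
        Finset.sum_le_sum_of_subset_of_nonneg Finsupp.support_tsub fun a _ _ => Nat.zero_le _
    _ = m.sum fun _ e => e := rfl

/-! Geometry of triangles -/

namespace Tri

variable (K : Tri)

lemma convex_toSet : Convex ℝ K.toSet := convex_convexHull ℝ _

lemma isCompact_toSet : IsCompact K.toSet := (Set.finite_range K.V).isCompact_convexHull ℝ

lemma measurableSet_toSet : MeasurableSet K.toSet :=
  (isCompact_toSet K).isClosed.measurableSet

lemma interior_nonempty : (interior K.toSet).Nonempty := by
  rw [Tri.toSet, interior_convexHull_nonempty_iff_affineSpan_eq_top,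
    K.indep.affineSpan_eq_top_iff_card_eq_finrank_add_one]
  simp [finrank_euclideanSpace_fin]

lemma uniqueDiffOn : UniqueDiffOn ℝ K.toSet :=
  uniqueDiffOn_convex (convex_toSet K) (interior_nonempty K)

lemma edge_subset (i : Fin 3) : K.edge i ⊆ K.toSet :=
  (convex_toSet K).segment_subset
    (subset_convexHull ℝ _ (Set.mem_range_self _)) (subset_convexHull ℝ _ (Set.mem_range_self _))

lemma isCompact_edge (i : Fin 3) : IsCompact (K.edge i) := by
  rw [Tri.edge, segment_eq_image]
  exact isCompact_Icc.image (by fun_prop)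

lemma measurableSet_edge (i : Fin 3) : MeasurableSet (K.edge i) :=
  (isCompact_edge K i).isClosed.measurableSet

lemma edge_fin (i : Fin 3) : μH[1] (K.edge i) ≠ ⊤ := by
  rw [Tri.edge, hausdorffMeasure_segment]; exact edist_ne_top _ _

lemma diam_nonneg : 0 ≤ K.diam := Metric.diam_nonneg

lemma volume_toSet_fin : volume K.toSet ≠ ⊤ :=
  (isCompact_toSet K).measure_lt_top.ne

end Tri

/-! Norms on `ℝ²` -/

lemma E2.norm_sq_eq (y : E2) : ‖y‖ ^ 2 = ∑ d : Fin 2, (y d) ^ 2 := by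
  rw [EuclideanSpace.norm_eq, Real.sq_sqrt (by positivity)]
  simp [Real.norm_eq_abs, sq_abs]

lemma E2.decomp (y : E2) : y = y 0 • e2 0 + y 1 • e2 1 := by
  apply PiLp.ext
  intro j
  fin_cases j <;> simp [e2, EuclideanSpace.single_apply]

lemma norm_rot90 (w : E2) : ‖rot90 w‖ = ‖w‖ := by
  rw [EuclideanSpace.norm_eq, EuclideanSpace.norm_eq]
  congr 1
  simp [rot90, EuclideanSpace.single_apply, Fin.sum_univ_two]
  ring

lemma apply_norm_sq_le (L : E2 →L[ℝ] E2) {u : E2} (hu : ‖u‖ = 1) :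
    ‖L u‖ ^ 2 ≤ ‖L (e2 0)‖ ^ 2 + ‖L (e2 1)‖ ^ 2 := by
  have h1 : ‖L u‖ ≤ |u 0| * ‖L (e2 0)‖ + |u 1| * ‖L (e2 1)‖ := by
    conv_lhs => rw [E2.decomp u]
    rw [map_add, _root_.map_smul, _root_.map_smul]
    refine (norm_add_le _ _).trans ?_
    simp [norm_smul, Real.norm_eq_abs]
  have h2 : u 0 * u 0 + u 1 * u 1 = 1 := by
    have h3 : (inner ℝ u u : ℝ) = ‖u‖ ^ 2 := real_inner_self_eq_norm_sq u
    rw [hu] at h3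
    rw [PiLp.inner_apply] at h3
    simpa [Fin.sum_univ_two, pow_two] using h3
  nlinarith [abs_nonneg (u 0), abs_nonneg (u 1), norm_nonneg (L (e2 0)), norm_nonneg (L (e2 1)),
    norm_nonneg (L u), sq_abs (u 0), sq_abs (u 1),
    sq_nonneg (|u 0| * ‖L (e2 1)‖ - |u 1| * ‖L (e2 0)‖)]

lemma Tri.V_ne (K : Tri) (i : Fin 3) : K.V (i + 2) - K.V (i + 1) ≠ 0 := by
  intro h
  have h2 : K.V (i + 2) = K.V (i + 1) := by
    rwa [sub_eq_zero] at h
  have h3 := K.indep.injective h2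
  have h4 : (2 : Fin 3) = 1 := by
    have := add_left_cancel h3
    exact this
  exact absurd h4 (by decide)

lemma Tri.norm_normal (K : Tri) (i : Fin 3) : ‖K.normal i‖ = 1 := by
  have hw : K.V (i + 2) - K.V (i + 1) ≠ 0 := K.V_ne i
  have hr : rot90 (K.V (i + 2) - K.V (i + 1)) ≠ 0 := by
    intro h
    apply hw
    have := norm_rot90 (K.V (i + 2) - K.V (i + 1))
    rw [h, norm_zero] at this
    exact norm_eq_zero.mp this.symm
  have hn : ‖‖rot90 (K.V (i + 2) - K.V (i + 1))‖⁻¹ • rot90 (K.V (i + 2) - K.V (i + 1))‖ = 1 := by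
    rw [norm_smul, norm_inv, norm_norm, inv_mul_cancel₀ (norm_ne_zero_iff.mpr hr)]
  rw [Tri.normal]
  split_ifs <;> simp [hn]

/-- Integrability of continuous functions on compact sets of finite measure. -/
lemma intOn {f : E2 → ℝ} (hf : Continuous f) {s : Set E2} (hs : IsCompact s)
    {μ : MeasureTheory.Measure E2} (hμ : μ s ≠ ⊤) : MeasureTheory.IntegrableOn f s μ := by
  obtain ⟨C, hC⟩ := hs.exists_bound_of_continuousOn hf.continuousOn
  exact MeasureTheory.Measure.integrableOn_of_bounded hμ hf.aestronglyMeasurable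
    ((MeasureTheory.ae_restrict_iff' hs.isClosed.measurableSet).2
      (MeasureTheory.ae_of_all _ hC))

/-! Vector polynomial derivatives -/

/-- Derivative CLM of a vector polynomial map. -/
def pDV (p : Fin 2 → MvPolynomial (Fin 2) ℝ) (x : E2) : E2 →L[ℝ] E2 :=
  (((PiLp.continuousLinearEquiv 2 ℝ (fun _ : Fin 2 => ℝ)).symm :
      (Fin 2 → ℝ) →L[ℝ] E2)).comp (ContinuousLinearMap.pi fun d => pD (p d) x)

lemma pDV_apply (p : Fin 2 → MvPolynomial (Fin 2) ℝ) (x u : E2) (d : Fin 2) :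
    pDV p x u d = pD (p d) x u := rfl

lemma pDV_normSq (p : Fin 2 → MvPolynomial (Fin 2) ℝ) (x u : E2) :
    ‖pDV p x u‖ ^ 2 = ∑ d : Fin 2, (pD (p d) x u) ^ 2 := by
  rw [E2.norm_sq_eq]
  exact Finset.sum_congr rfl fun d _ => by rw [pDV_apply]

lemma pD_apply_e2 (p : MvPolynomial (Fin 2) ℝ) (x : E2) (i : Fin 2) :
    pD p x (e2 i) = pev (MvPolynomial.pderiv i p) x := by
  rw [pD_apply]
  have he : ∀ j : Fin 2, (e2 i) j = if j = i then 1 else 0 := fun j => by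
    simp [e2, EuclideanSpace.single_apply]
  rw [Fin.sum_univ_two, he 0, he 1]
  fin_cases i <;> simp

lemma continuous_pD_apply (p : MvPolynomial (Fin 2) ℝ) (u : E2) :
    Continuous fun x => pD p x u := by
  simp only [pD_apply]
  exact continuous_finset_sum _ fun i _ => (continuous_pev _).mul continuous_const

lemma fderivWithin_poly (K : Tri) (f : E2 → ℝ) (p : MvPolynomial (Fin 2) ℝ)
    (hag : ∀ x ∈ K.toSet, f x = pev p x) {x : E2} (hx : x ∈ K.toSet) :
    fderivWithin ℝ f K.toSet x = pD p x :=
  (((hasFDerivAt_pev p x).hasFDerivWithinAt.congr hag (hag x hx))).fderivWithin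
    (K.uniqueDiffOn x hx)

lemma fderivWithin_polyVec (K : Tri) (f : E2 → E2) (p : Fin 2 → MvPolynomial (Fin 2) ℝ)
    (hag : ∀ c : Fin 2, ∀ x ∈ K.toSet, f x c = pev (p c) x) {x : E2} (hx : x ∈ K.toSet) :
    fderivWithin ℝ f K.toSet x = pDV p x := by
  have hP : HasFDerivAt
      (fun y => ((PiLp.continuousLinearEquiv 2 ℝ (fun _ : Fin 2 => ℝ)).symm :
        (Fin 2 → ℝ) →L[ℝ] E2) (fun c => pev (p c) y)) (pDV p x) x :=
    (((PiLp.continuousLinearEquiv 2 ℝ (fun _ : Fin 2 => ℝ)).symm :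
        (Fin 2 → ℝ) →L[ℝ] E2).hasFDerivAt).comp x
      (hasFDerivAt_pi.2 fun c => hasFDerivAt_pev (p c) x)
  have heq : ∀ y ∈ K.toSet, f y = ((PiLp.continuousLinearEquiv 2 ℝ (fun _ : Fin 2 => ℝ)).symm :
      (Fin 2 → ℝ) →L[ℝ] E2) (fun c => pev (p c) y) := by
    intro y hy
    apply PiLp.ext
    intro c
    rw [hag c y hy]
    rfl
  exact ((hP.hasFDerivWithinAt.congr heq (heq x hx))).fderivWithin (K.uniqueDiffOn x hx)

lemma pDV_bound (p : Fin 2 → MvPolynomial (Fin 2) ℝ) (x : E2) {u : E2} (hu : ‖u‖ = 1) :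
    ∑ d : Fin 2, (pD (p d) x u) ^ 2
      ≤ ∑ c : Fin 2, ∑ d : Fin 2, (pev (MvPolynomial.pderiv c (p d)) x) ^ 2 := by
  have h := apply_norm_sq_le (pDV p x) hu
  rw [pDV_normSq, pDV_normSq, pDV_normSq] at h
  simp only [Fin.sum_univ_two, pD_apply_e2] at h ⊢
  linarith

/-! Per-triangle identities for the norms -/

lemma sob_eq (K : Tri) (f : E2 → E2) (p : Fin 2 → MvPolynomial (Fin 2) ℝ)
    (hag : ∀ c : Fin 2, ∀ x ∈ K.toSet, f x c = pev (p c) x) :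
    sobSemiVecSq 1 K.toSet f
      = ∑ d : Fin 2, ∑ c : Fin 2,
          ∫ x in K.toSet, (pev (MvPolynomial.pderiv c (p d)) x) ^ 2 := by
  rw [sobSemiVecSq]
  refine Finset.sum_congr rfl fun d _ => ?_
  rw [sobSemiSq, Finset.sum_range_succ, Finset.sum_range_one]
  have hd : ∀ i : Fin 2, ∀ x ∈ K.toSet, dWi K.toSet i (fun y => f y d) x
      = pev (MvPolynomial.pderiv i (p d)) x := by
    intro i x hx
    rw [dWi, fderivWithin_poly K (fun y => f y d) (p d) (hag d) hx, pD_apply_e2]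
  have h0 : pderivW K.toSet 0 (1 - 0) (fun y => f y d) = dWi K.toSet 1 (fun y => f y d) := by
    simp [pderivW]
  have h1 : pderivW K.toSet 1 (1 - 1) (fun y => f y d) = dWi K.toSet 0 (fun y => f y d) := by
    simp [pderivW]
  have e1 : (∫ x in K.toSet, (dWi K.toSet 1 (fun y => f y d) x) ^ 2)
      = ∫ x in K.toSet, (pev (MvPolynomial.pderiv 1 (p d)) x) ^ 2 :=
    MeasureTheory.setIntegral_congr_fun K.measurableSet_toSet
      (fun x hx => congrArg (· ^ 2) (hd 1 x hx))
  have e0 : (∫ x in K.toSet, (dWi K.toSet 0 (fun y => f y d) x) ^ 2)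
      = ∫ x in K.toSet, (pev (MvPolynomial.pderiv 0 (p d)) x) ^ 2 :=
    MeasureTheory.setIntegral_congr_fun K.measurableSet_toSet
      (fun x hx => congrArg (· ^ 2) (hd 0 x hx))
  rw [h0, h1, e1, e0, Fin.sum_univ_two]
  ring

lemma intOn_pev_sq (K : Tri) (q : MvPolynomial (Fin 2) ℝ) :
    MeasureTheory.IntegrableOn (fun x => (pev q x) ^ 2) K.toSet volume :=
  intOn ((continuous_pev q).pow 2) (K.isCompact_toSet) (K.volume_toSet_fin)

lemma grad_eq (ν : ℝ) (K : Tri) (f : E2 → E2) (p : Fin 2 → MvPolynomial (Fin 2) ℝ)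
    (hag : ∀ c : Fin 2, ∀ x ∈ K.toSet, f x c = pev (p c) x) :
    (∫ x in K.toSet, ν * ∑ c : Fin 2,
        ⟪fderivWithin ℝ f K.toSet x (e2 c), fderivWithin ℝ f K.toSet x (e2 c)⟫)
      = ν * sobSemiVecSq 1 K.toSet f := by
  rw [MeasureTheory.integral_const_mul]
  congr 1
  have hptw : Set.EqOn
      (fun x => ∑ c : Fin 2,
        ⟪fderivWithin ℝ f K.toSet x (e2 c), fderivWithin ℝ f K.toSet x (e2 c)⟫)
      (fun x => ∑ c : Fin 2, ∑ d : Fin 2, (pev (MvPolynomial.pderiv c (p d)) x) ^ 2)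
      K.toSet := by
    intro x hx
    refine Finset.sum_congr rfl fun c _ => ?_
    rw [PiLp.inner_apply]
    refine Finset.sum_congr rfl fun d _ => ?_
    rw [fderivWithin_polyVec K f p hag hx]
    simp only [RCLike.inner_apply, conj_trivial]
    rw [pDV_apply, pD_apply_e2, pow_two]
  rw [MeasureTheory.setIntegral_congr_fun (K.measurableSet_toSet) hptw]
  rw [MeasureTheory.integral_finset_sum _ (fun c _ =>
    MeasureTheory.integrable_finset_sum _ (fun d _ => intOn_pev_sq K _))]
  rw [Finset.sum_congr rfl fun c (_ : c ∈ Finset.univ) =>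
    MeasureTheory.integral_finset_sum _ (fun d _ => intOn_pev_sq K _)]
  rw [sob_eq K f p hag]
  exact Finset.sum_comm

lemma intOn_edge {g : E2 → ℝ} (hg : Continuous g) (K : Tri) (i : Fin 3) :
    MeasureTheory.IntegrableOn g (K.edge i) μH[1] :=
  intOn hg (K.isCompact_edge i) (K.edge_fin i)

lemma trace_bound (M : Mesh) (k : ℕ) (Cmax : ℝ) (hC : TraceConst M k Cmax)
    (K : Tri) (hK : K ∈ M.T) (f : E2 → E2) (p : Fin 2 → MvPolynomial (Fin 2) ℝ)
    (hag : ∀ c : Fin 2, ∀ x ∈ K.toSet, f x c = pev (p c) x)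
    (hdeg : ∀ c, (p c).totalDegree ≤ k) :
    K.diam * ∑ i : Fin 3,
        ∫ x in K.edge i, ‖fderivWithin ℝ f K.toSet x (K.normal i)‖ ^ 2 ∂μH[1]
      ≤ Cmax ^ 2 * sobSemiVecSq 1 K.toSet f := by
  have hcont1 : ∀ i : Fin 3, Continuous fun x => ∑ d : Fin 2, (pD (p d) x (K.normal i)) ^ 2 :=
    fun i => continuous_finset_sum _ fun d _ => (continuous_pD_apply (p d) (K.normal i)).pow 2
  have hcont2 : Continuous fun x => ∑ c : Fin 2, ∑ d : Fin 2,
      (pev (MvPolynomial.pderiv c (p d)) x) ^ 2 :=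
    continuous_finset_sum _ fun c _ => continuous_finset_sum _ fun d _ =>
      (continuous_pev _).pow 2
  have hedge : ∀ i : Fin 3,
      (∫ x in K.edge i, ‖fderivWithin ℝ f K.toSet x (K.normal i)‖ ^ 2 ∂μH[1])
      ≤ ∫ x in K.edge i, (∑ c : Fin 2, ∑ d : Fin 2,
          (pev (MvPolynomial.pderiv c (p d)) x) ^ 2) ∂μH[1] := by
    intro i
    have hrw : Set.EqOn (fun x => ‖fderivWithin ℝ f K.toSet x (K.normal i)‖ ^ 2)
        (fun x => ∑ d : Fin 2, (pD (p d) x (K.normal i)) ^ 2) (K.edge i) := by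
      intro x hx
      show ‖fderivWithin ℝ f K.toSet x (K.normal i)‖ ^ 2
          = ∑ d : Fin 2, (pD (p d) x (K.normal i)) ^ 2
      rw [fderivWithin_polyVec K f p hag (K.edge_subset i hx), pDV_normSq]
    rw [MeasureTheory.setIntegral_congr_fun (K.measurableSet_edge i) hrw]
    exact MeasureTheory.setIntegral_mono_on (intOn_edge (hcont1 i) K i)
      (intOn_edge hcont2 K i) (K.measurableSet_edge i)
      (fun x _ => pDV_bound p x (K.norm_normal i))
  have hswap : ∑ i : Fin 3, ∫ x in K.edge i, (∑ c : Fin 2, ∑ d : Fin 2,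
        (pev (MvPolynomial.pderiv c (p d)) x) ^ 2) ∂μH[1]
      = ∑ c : Fin 2, ∑ d : Fin 2, bdrySq K (fun x => pev (MvPolynomial.pderiv c (p d)) x) := by
    have h1 : ∀ i : Fin 3, ∫ x in K.edge i, (∑ c : Fin 2, ∑ d : Fin 2,
          (pev (MvPolynomial.pderiv c (p d)) x) ^ 2) ∂μH[1]
        = ∑ c : Fin 2, ∑ d : Fin 2,
            ∫ x in K.edge i, (pev (MvPolynomial.pderiv c (p d)) x) ^ 2 ∂μH[1] := by
      intro i
      rw [MeasureTheory.integral_finset_sum _ (fun c _ =>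
        MeasureTheory.integrable_finset_sum _ (fun d _ =>
          intOn_edge (g := fun x => (pev (MvPolynomial.pderiv c (p d)) x) ^ 2)
            ((continuous_pev _).pow 2) K i))]
      exact Finset.sum_congr rfl fun c _ =>
        MeasureTheory.integral_finset_sum _ (fun d _ =>
          intOn_edge (g := fun x => (pev (MvPolynomial.pderiv c (p d)) x) ^ 2)
            ((continuous_pev _).pow 2) K i)
    rw [Finset.sum_congr rfl fun i (_ : i ∈ Finset.univ) => h1 i]
    rw [Finset.sum_comm]
    refine Finset.sum_congr rfl fun c _ => ?_
    rw [Finset.sum_comm]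
    rfl
  have htr : ∀ c d : Fin 2, K.diam * bdrySq K (fun x => pev (MvPolynomial.pderiv c (p d)) x)
      ≤ Cmax ^ 2 * l2Sq K.toSet (fun x => pev (MvPolynomial.pderiv c (p d)) x) := by
    intro c d
    have hpoly : IsPolyOn k Set.univ (fun x => pev (MvPolynomial.pderiv c (p d)) x) :=
      ⟨MvPolynomial.pderiv c (p d), (totalDegree_pderiv_le c (p d)).trans (hdeg d),
        fun x _ => rfl⟩
    have h := hC.2 K hK _ hpoly
    have hb : 0 ≤ bdrySq K (fun x => pev (MvPolynomial.pderiv c (p d)) x) :=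
      Finset.sum_nonneg fun i _ => MeasureTheory.integral_nonneg fun x => sq_nonneg _
    have hl : 0 ≤ l2Sq K.toSet (fun x => pev (MvPolynomial.pderiv c (p d)) x) :=
      MeasureTheory.integral_nonneg fun x => sq_nonneg _
    have h2 := pow_le_pow_left₀ (mul_nonneg (Real.sqrt_nonneg _) (Real.sqrt_nonneg _)) h 2
    rw [mul_pow, mul_pow] at h2
    simp only [bdryN, l2N] at h2
    rw [Real.sq_sqrt hb, Real.sq_sqrt hl, Real.sq_sqrt K.diam_nonneg] at h2
    exact h2
  calc K.diam * ∑ i : Fin 3,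
        ∫ x in K.edge i, ‖fderivWithin ℝ f K.toSet x (K.normal i)‖ ^ 2 ∂μH[1]
      ≤ K.diam * ∑ i : Fin 3, ∫ x in K.edge i, (∑ c : Fin 2, ∑ d : Fin 2,
          (pev (MvPolynomial.pderiv c (p d)) x) ^ 2) ∂μH[1] :=
        mul_le_mul_of_nonneg_left (Finset.sum_le_sum fun i _ => hedge i) K.diam_nonneg
    _ = ∑ c : Fin 2, ∑ d : Fin 2,
          K.diam * bdrySq K (fun x => pev (MvPolynomial.pderiv c (p d)) x) := by
        rw [hswap, Finset.mul_sum]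
        exact Finset.sum_congr rfl fun c _ => Finset.mul_sum _ _ _
    _ ≤ ∑ c : Fin 2, ∑ d : Fin 2,
          Cmax ^ 2 * l2Sq K.toSet (fun x => pev (MvPolynomial.pderiv c (p d)) x) :=
        Finset.sum_le_sum fun c _ => Finset.sum_le_sum fun d _ => htr c d
    _ = Cmax ^ 2 * sobSemiVecSq 1 K.toSet f := by
        rw [sob_eq K f p hag, Finset.mul_sum]
        rw [Finset.sum_comm]
        refine Finset.sum_congr rfl fun d _ => ?_
        rw [Finset.mul_sum]
        exact Finset.sum_congr rfl fun c _ => rfl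

end EllAux



/-- Lemma 4, case `ε = 1`: ellipticity of `a`. If `ε = 1` then for any
`τ > 0` the form `a` is elliptic on `V_h` with constant `α = 1/(1 + C_max²)`:
`a((v_h, ṽ_h), (v_h, ṽ_h)) ≥ α |||(v_h, ṽ_h)|||²` for all `(v_h, ṽ_h) ∈ V_h`. -/
theorem ellipticity_nonsymmetric (M : Mesh) (k : ℕ) (hk : 1 ≤ k) (ν τ : ℝ)
    (hν : 0 < ν) (hτ : 0 < τ) (Cmax : ℝ) (hC : TraceConst M k Cmax)
    (v : Vb) (vt : E2 → ℝ) (hv : MemBDM M k v) (hvt : MemM0 M (k - 1) vt) :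
    (1 / (1 + Cmax ^ 2)) * tnormSq M k ν τ v vt ≤ aForm M k ν τ 1 v vt v vt := by
  obtain ⟨hCpos, hTrace⟩ := hC
  have hpos : (0:ℝ) < 1 + Cmax ^ 2 := by positivity
  rw [one_div, inv_mul_le_iff₀ hpos]
  rw [tnormSq, aForm, Finset.mul_sum, Finset.mul_sum]
  refine Finset.sum_le_sum fun K hK => ?_
  choose p hdeg hag using hv.1 K hK
  have hag' : ∀ c : Fin 2, ∀ x ∈ K.toSet, v K x c = pev (p c) x := fun c x hx => hag c x hx
  have hgrad := grad_eq ν K (v K) p hag'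
  have htrace := trace_bound M k Cmax ⟨hCpos, hTrace⟩ K hK (v K) p hag' hdeg
  have hcancel : (∑ i : Fin 3, ∫ x in Tri.edge K i,
        ν * dnt K i (v K) x * (tComp K i (v K) x - vt x) ∂μH[1])
      = ∑ i : Fin 3, ∫ x in Tri.edge K i,
        ν * (tComp K i (v K) x - vt x) * dnt K i (v K) x ∂μH[1] := by
    refine Finset.sum_congr rfl fun i _ => ?_
    congr 1
    ext x
    ring
  have hstab : (∑ i : Fin 3, ∫ x in Tri.edge K i,
        edgeProj (k - 1) (Tri.edge K i) (fun y => tComp K i (v K) y - vt y) x *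
          edgeProj (k - 1) (Tri.edge K i) (fun y => tComp K i (v K) y - vt y) x ∂μH[1])
      = ∑ i : Fin 3, ∫ x in Tri.edge K i,
          (edgeProj (k - 1) (Tri.edge K i) (fun y => tComp K i (v K) y - vt y) x) ^ 2 ∂μH[1] := by
    refine Finset.sum_congr rfl fun i _ => ?_
    congr 1
    ext x
    rw [pow_two]
  rw [hgrad, hcancel, hstab]
  have hSb : 0 ≤ ∑ i : Fin 3, ∫ x in Tri.edge K i,
      (edgeProj (k - 1) (Tri.edge K i) (fun y => tComp K i (v K) y - vt y) x) ^ 2 ∂μH[1] :=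
    Finset.sum_nonneg fun i _ => MeasureTheory.integral_nonneg fun x => sq_nonneg _
  have hA : 0 ≤ sobSemiVecSq 1 (Tri.toSet K) (v K) := by
    rw [sob_eq K (v K) p hag']
    exact Finset.sum_nonneg fun d _ => Finset.sum_nonneg fun c _ =>
      MeasureTheory.integral_nonneg fun x => sq_nonneg _
  have ht : 0 ≤ τ / K.diam := div_nonneg hτ.le K.diam_nonneg
  set A := sobSemiVecSq 1 (Tri.toSet K) (v K) with hAdef
  set DB := K.diam * ∑ i : Fin 3, ∫ x in Tri.edge K i,
      ‖fderivWithin ℝ (v K) (Tri.toSet K) x (K.normal i)‖ ^ 2 ∂μH[1] with hDBdef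
  set Sb := ∑ i : Fin 3, ∫ x in Tri.edge K i,
      (edgeProj (k - 1) (Tri.edge K i) (fun y => tComp K i (v K) y - vt y) x) ^ 2 ∂μH[1]
    with hSbdef
  set T := ∑ i : Fin 3, ∫ x in Tri.edge K i,
      ν * (tComp K i (v K) x - vt x) * dnt K i (v K) x ∂μH[1] with hTdef
  set t := τ / K.diam with htdef
  have h1 : 0 ≤ ν * (t * Sb) := mul_nonneg hν.le (mul_nonneg ht hSb)
  have h2 : 0 ≤ Cmax ^ 2 * (ν * (t * Sb)) := mul_nonneg (sq_nonneg _) h1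
  have h3 : ν * DB ≤ ν * (Cmax ^ 2 * A) := mul_le_mul_of_nonneg_left htrace hν.le
  have h4 : 0 ≤ Cmax ^ 2 * (ν * A) := mul_nonneg (sq_nonneg _) (mul_nonneg hν.le hA)
  nlinarith [h1, h2, h3, h4]


end
end

section
/- If ε = −1 in the bilinear form a and τ > 2 C_max², then a is elliptic on V_h: with C := min{1/2, (τ − 2C_max²)/τ} and α := C/(1 + C_max²), for all (v_h, ṽ_h) ∈ V_h one has a((v_h,ṽ_h),(v_h,ṽ_h)) ≥ α |||(v_h,ṽ_h)|||². -/
open MeasureTheory RealInnerProductSpace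

noncomputable section

namespace HDG

open MvPolynomial

/-- evaluation of a bivariate polynomial as a function on `E2`. -/
def evalFn (p : MvPolynomial (Fin 2) ℝ) : E2 → ℝ := fun x => MvPolynomial.eval (fun i => x i) p

lemma evalFn_add (p q) : evalFn (p + q) = evalFn p + evalFn q := by
  funext x; simp [evalFn]

/-- derivative CLM of `evalFn p` at `x`. -/
def gradCLM (p : MvPolynomial (Fin 2) ℝ) (x : E2) : E2 →L[ℝ] ℝ :=
  ∑ c : Fin 2, evalFn (pderiv c p) x • (EuclideanSpace.proj c : E2 →L[ℝ] ℝ)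

lemma gradCLM_apply (p x) (u : E2) : gradCLM p x u = ∑ c : Fin 2, evalFn (pderiv c p) x * u c := by
  simp [gradCLM, ContinuousLinearMap.sum_apply, smul_eq_mul]

lemma hasFDerivAt_evalFn (p : MvPolynomial (Fin 2) ℝ) (x : E2) :
    HasFDerivAt (evalFn p) (gradCLM p x) x := by
  induction p using MvPolynomial.induction_on with
  | C a =>
      have h1 : evalFn (C a) = fun _ => a := by funext y; simp [evalFn]
      have h2 : gradCLM (C a) x = 0 := by
        ext u; simp [gradCLM, evalFn]
      rw [h1, h2]; exact hasFDerivAt_const a x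
  | add p q hp hq =>
      have h2 : gradCLM (p + q) x = gradCLM p x + gradCLM q x := by
        ext u
        simp only [gradCLM, map_add, evalFn, ContinuousLinearMap.sum_apply,
          ContinuousLinearMap.add_apply, ContinuousLinearMap.smul_apply, smul_eq_mul]
        rw [← Finset.sum_add_distrib]
        exact Finset.sum_congr rfl fun c _ => by simp [MvPolynomial.eval_add]; ring
      rw [evalFn_add, h2]
      exact hp.add hq
  | mul_X p i hp =>
      have hX : HasFDerivAt (fun y : E2 => y i) (EuclideanSpace.proj i : E2 →L[ℝ] ℝ) x :=
        (EuclideanSpace.proj i : E2 →L[ℝ] ℝ).hasFDerivAt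
      have h1 : evalFn (p * X i) = fun y => evalFn p y * y i := by
        funext y; simp [evalFn]
      have hmul := hp.mul' hX
      have h2 : gradCLM (p * X i) x = evalFn p x • (EuclideanSpace.proj i : E2 →L[ℝ] ℝ)
          + (gradCLM p x).smulRight (x i) := by
        ext u
        simp only [gradCLM, ContinuousLinearMap.sum_apply, ContinuousLinearMap.add_apply,
          ContinuousLinearMap.smul_apply, ContinuousLinearMap.smulRight_apply, smul_eq_mul,
          Finset.sum_mul]
        have hps : ∀ c : Fin 2, evalFn ((pderiv c) (p * X i)) x
            = evalFn ((pderiv c) p) x * x i + (if c = i then evalFn p x else 0) := by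
          intro c
          by_cases hc : c = i
          · subst hc; simp [evalFn, pderiv_mul, pderiv_X_self]; ring
          · simp [evalFn, pderiv_mul, pderiv_X_of_ne (Ne.symm hc), hc]; ring
        simp only [hps, add_mul, ite_mul, zero_mul, Finset.sum_add_distrib,
          Finset.sum_ite_eq', Finset.mem_univ, if_true]
        rw [add_comm]
        congr 1
        exact Finset.sum_congr rfl fun c _ => by ring
      rw [h1, h2]
      exact hmul

lemma continuous_evalFn (p) : Continuous (evalFn p) := by
  have : Differentiable ℝ (evalFn p) := fun x => (hasFDerivAt_evalFn p x).differentiableAt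
  exact this.continuous

lemma totalDegree_pderiv_le (p : MvPolynomial (Fin 2) ℝ) (c : Fin 2) (k : ℕ)
    (hp : p.totalDegree ≤ k) : (pderiv c p).totalDegree ≤ k - 1 := by
  conv_lhs => rw [p.as_sum]
  rw [map_sum]
  refine (MvPolynomial.totalDegree_finset_sum _ _).trans ?_
  refine Finset.sup_le fun v hv => ?_
  rw [pderiv_monomial]
  by_cases h0 : v c = 0
  · simp [h0]
  · refine (MvPolynomial.totalDegree_monomial_le _ _).trans ?_
    show ((v - Finsupp.single c 1).sum fun _ n => n) ≤ k - 1
    have hle : Finsupp.single c 1 ≤ v := by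
      rw [Finsupp.single_le_iff]; omega
    have hsum : (v - Finsupp.single c 1).sum (fun _ n => n) + 1 = v.sum (fun _ n => n) := by
      have hv' : (v - Finsupp.single c 1) + Finsupp.single c 1 = v := tsub_add_cancel_of_le hle
      conv_rhs => rw [← hv']
      rw [Finsupp.sum_add_index' (fun _ => rfl) (fun _ m n => rfl)]
      simp
    have hdv : v.sum (fun _ n => n) ≤ k := le_trans (MvPolynomial.le_totalDegree hv) hp
    omega

end HDG

namespace HDG

open MvPolynomial

/-! ### Triangle geometry -/

variable (K : Tri)

lemma convex_toSet : Convex ℝ K.toSet := convex_convexHull ℝ _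

lemma isCompact_toSet : IsCompact K.toSet :=
  (Set.finite_range K.V).isCompact_convexHull ℝ

lemma measurableSet_toSet : MeasurableSet K.toSet :=
  (isCompact_toSet K).isClosed.measurableSet

lemma interior_nonempty : (interior K.toSet).Nonempty := by
  rw [Tri.toSet, interior_convexHull_nonempty_iff_affineSpan_eq_top,
    K.indep.affineSpan_eq_top_iff_card_eq_finrank_add_one]
  simp [finrank_euclideanSpace_fin]

lemma uniqueDiffOn_toSet : UniqueDiffOn ℝ K.toSet :=
  uniqueDiffOn_convex (convex_toSet K) (interior_nonempty K)

lemma V_mem_toSet (i : Fin 3) : K.V i ∈ K.toSet :=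
  subset_convexHull ℝ _ ⟨i, rfl⟩

lemma V_injective : Function.Injective K.V := K.indep.injective

lemma diam_pos : 0 < K.diam := by
  have h01 : K.V 0 ≠ K.V 1 := fun h => by simpa using V_injective K h
  have : dist (K.V 0) (K.V 1) ≤ K.diam :=
    Metric.dist_le_diam_of_mem (isCompact_toSet K).isBounded (V_mem_toSet K 0) (V_mem_toSet K 1)
  have := dist_pos.2 h01
  unfold Tri.diam at *
  linarith

lemma edge_subset (i : Fin 3) : K.edge i ⊆ K.toSet := by
  rw [Tri.edge]
  exact segment_subset_convexHull ⟨_, rfl⟩ ⟨_, rfl⟩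

lemma isCompact_edge (i : Fin 3) : IsCompact (K.edge i) := by
  rw [Tri.edge, segment_eq_image]
  exact (isCompact_Icc.image (by fun_prop))

lemma measurableSet_edge (i : Fin 3) : MeasurableSet (K.edge i) :=
  (isCompact_edge K i).isClosed.measurableSet

lemma edge_measure_lt_top (i : Fin 3) : μH[1] (K.edge i) < ⊤ := by
  set a := K.V (i + 1); set b := K.V (i + 2)
  have hseg : K.edge i = (fun t : ℝ => a + t • (b - a)) '' Set.Icc 0 1 := by
    rw [Tri.edge, segment_eq_image']
  have hlip : LipschitzWith ‖b - a‖₊ (fun t : ℝ => a + t • (b - a)) := by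
    apply LipschitzWith.of_dist_le_mul
    intro s t
    simp only [dist_eq_norm, add_sub_add_left_eq_sub, ← sub_smul, norm_smul]
    rw [mul_comm]
    simp [Real.norm_eq_abs, abs_sub_comm]
  have hb := hlip.hausdorffMeasure_image_le (zero_le_one) (Set.Icc (0:ℝ) 1)
  rw [← hseg] at hb
  refine lt_of_le_of_lt hb ?_
  rw [MeasureTheory.hausdorffMeasure_real, Real.volume_Icc]
  apply ENNReal.mul_lt_top
  · simp [ENNReal.rpow_one]
  · simp

instance edge_finiteMeasure (i : Fin 3) : IsFiniteMeasure (μH[1].restrict (K.edge i)) :=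
  ⟨by rw [Measure.restrict_apply_univ]; exact edge_measure_lt_top K i⟩

lemma norm_canonTangent {a b : E2} (h : a ≠ b) : ‖canonTangent a b‖ = 1 := by
  rw [canonTangent]
  have h1 : b - a ≠ 0 := sub_ne_zero.2 (Ne.symm h)
  have h2 : a - b ≠ 0 := sub_ne_zero.2 h
  split
  · rw [norm_smul]
    simp [Real.norm_eq_abs, abs_of_nonneg (by positivity : (0:ℝ) ≤ ‖b - a‖⁻¹),
      inv_mul_cancel₀ (norm_ne_zero_iff.2 h1)]
  · rw [norm_smul]
    simp [Real.norm_eq_abs, abs_of_nonneg (by positivity : (0:ℝ) ≤ ‖a - b‖⁻¹),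
      inv_mul_cancel₀ (norm_ne_zero_iff.2 h2)]

lemma V_succ_ne (i : Fin 3) : K.V (i + 1) ≠ K.V (i + 2) := by
  intro h
  have := V_injective K h
  have : (1 : Fin 3) = 2 := by
    have := add_right_injective i this; simpa using this
  simp at this

lemma norm_tangent (i : Fin 3) : ‖K.tangent i‖ = 1 :=
  norm_canonTangent (V_succ_ne K i)

lemma rot90_apply0 (v : E2) : rot90 v 0 = -(v 1) := by
  simp [rot90, EuclideanSpace.single_apply]

lemma rot90_apply1 (v : E2) : rot90 v 1 = v 0 := by
  simp [rot90, EuclideanSpace.single_apply]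

lemma norm_rot90 (v : E2) : ‖rot90 v‖ = ‖v‖ := by
  rw [EuclideanSpace.norm_eq, EuclideanSpace.norm_eq]
  congr 1
  rw [Fin.sum_univ_two, Fin.sum_univ_two, rot90_apply0, rot90_apply1]
  simp [Real.norm_eq_abs, sq_abs]
  ring

lemma norm_normal (i : Fin 3) : ‖K.normal i‖ = 1 := by
  rw [Tri.normal]
  have hne : K.V (i + 2) - K.V (i + 1) ≠ 0 := sub_ne_zero.2 (Ne.symm (V_succ_ne K i))
  have hr : ‖rot90 (K.V (i + 2) - K.V (i + 1))‖ ≠ 0 := by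
    rw [norm_rot90]; exact norm_ne_zero_iff.2 hne
  split
  · rw [norm_neg, norm_smul]
    simp [Real.norm_eq_abs, abs_of_nonneg (by positivity : (0:ℝ) ≤ ‖rot90 (K.V (i + 2) - K.V (i + 1))‖⁻¹),
      inv_mul_cancel₀ hr]
  · rw [norm_smul]
    simp [Real.norm_eq_abs, abs_of_nonneg (by positivity : (0:ℝ) ≤ ‖rot90 (K.V (i + 2) - K.V (i + 1))‖⁻¹),
      inv_mul_cancel₀ hr]

lemma sum_sq_normal (i : Fin 3) : ∑ c : Fin 2, (K.normal i c) ^ 2 = 1 := by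
  have h2 : ‖K.normal i‖ ^ 2 = 1 := by rw [norm_normal]; norm_num
  rw [EuclideanSpace.norm_eq, Real.sq_sqrt (by positivity)] at h2
  simpa [Real.norm_eq_abs, sq_abs] using h2

end HDG


namespace HDG

open MvPolynomial

/-! ### a.e. and integrability helpers -/

lemma aeR {μ : Measure E2} {E : Set E2} (hE : MeasurableSet E) {f g : E2 → ℝ}
    (h : ∀ x ∈ E, f x = g x) : f =ᵐ[μ.restrict E] g :=
  (ae_restrict_iff' hE).2 (MeasureTheory.ae_of_all _ h)

lemma aeR_diff {μ : Measure E2} {E E' : Set E2} (hE : MeasurableSet E)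
    (hnull : μ (E \ E') = 0) {f g : E2 → ℝ} (h : ∀ x ∈ E', f x = g x) :
    f =ᵐ[μ.restrict E] g := by
  have hsub : {x | ¬ f x = g x} ⊆ (E \ E') ∪ Eᶜ := by
    intro x hx
    by_cases hxE : x ∈ E
    · rcases Classical.em (x ∈ E') with hE' | hE'
      · exact absurd (h x hE') hx
      · exact Or.inl ⟨hxE, hE'⟩
    · exact Or.inr hxE
  have h1 : μ.restrict E (E \ E') = 0 :=
    le_antisymm (le_trans (Measure.restrict_apply_le _ _) hnull.le) zero_le
  have h2 : μ.restrict E Eᶜ = 0 := by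
    rw [Measure.restrict_apply hE.compl]; simp
  refine (MeasureTheory.ae_iff).2 (measure_mono_null hsub ?_)
  exact le_antisymm (le_trans (measure_union_le _ _) (by rw [h1, h2]; simp)) zero_le

lemma memL2_of_cont {μ : Measure E2} {E : Set E2} (hE : MeasurableSet E) (hc : IsCompact E)
    [IsFiniteMeasure (μ.restrict E)] {g : E2 → ℝ} (hg : Continuous g) :
    MemLp g 2 (μ.restrict E) := by
  obtain ⟨C, hC⟩ := hc.exists_bound_of_continuousOn hg.continuousOn
  exact MemLp.of_bound hg.aestronglyMeasurable C
    ((ae_restrict_iff' hE).2 (MeasureTheory.ae_of_all _ fun x hx => hC x hx))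

lemma integrable_of_memL2 {μ : Measure E2} [IsFiniteMeasure μ] {f : E2 → ℝ}
    (hf : MemLp f 2 μ) : Integrable f μ :=
  memLp_one_iff_integrable.1 (hf.mono_exponent (by norm_num))

lemma l2_CS {μ : Measure E2} {f g : E2 → ℝ} (hf : MemLp f 2 μ) (hg : MemLp g 2 μ) :
    ∫ x, f x * g x ∂μ ≤ Real.sqrt (∫ x, f x ^ 2 ∂μ) * Real.sqrt (∫ x, g x ^ 2 ∂μ) := by
  haveI : Fact ((1:ENNReal) ≤ 2) := ⟨one_le_two⟩
  set F := hf.toLp f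
  set G := hg.toLp g
  have key : ∀ (a b : E2 → ℝ) (ha : MemLp a 2 μ) (hb : MemLp b 2 μ),
      ⟪ha.toLp a, hb.toLp b⟫ = ∫ x, a x * b x ∂μ := by
    intro a b ha hb
    rw [MeasureTheory.L2.inner_def]
    refine integral_congr_ae ?_
    filter_upwards [ha.coeFn_toLp, hb.coeFn_toLp] with x h1 h2
    simp [h1, h2, RCLike.inner_apply, conj_trivial]
    ring
  have hFG : ⟪F, G⟫ = ∫ x, f x * g x ∂μ := key f g hf hg
  have hFF : ‖F‖ = Real.sqrt (∫ x, f x ^ 2 ∂μ) := by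
    have h1 : ⟪F, F⟫ = ∫ x, f x ^ 2 ∂μ := by
      rw [key f f hf hf]; congr 1; funext x; ring
    rw [← Real.sqrt_sq (norm_nonneg F), ← real_inner_self_eq_norm_sq, h1]
  have hGG : ‖G‖ = Real.sqrt (∫ x, g x ^ 2 ∂μ) := by
    have h1 : ⟪G, G⟫ = ∫ x, g x ^ 2 ∂μ := by
      rw [key g g hg hg]; congr 1; funext x; ring
    rw [← Real.sqrt_sq (norm_nonneg G), ← real_inner_self_eq_norm_sq, h1]
  calc ∫ x, f x * g x ∂μ = ⟪F, G⟫ := hFG.symm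
    _ ≤ ‖F‖ * ‖G‖ := real_inner_le_norm F G
    _ = _ := by rw [hFF, hGG]

/-! ### derivatives of polynomial functions within sets -/

lemma fderivWithin_evalFn {s : Set E2} (hs : UniqueDiffOn ℝ s) {f : E2 → ℝ}
    {p : MvPolynomial (Fin 2) ℝ} (hf : ∀ x ∈ s, f x = evalFn p x) {x : E2} (hx : x ∈ s) :
    fderivWithin ℝ f s x = gradCLM p x := by
  rw [fderivWithin_congr hf (hf x hx)]
  exact ((hasFDerivAt_evalFn p x).hasFDerivWithinAt).fderivWithin (hs x hx)

lemma fderivWithin_vec {s : Set E2} (hs : UniqueDiffOn ℝ s) {v : E2 → E2}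
    {p : Fin 2 → MvPolynomial (Fin 2) ℝ}
    (hv : ∀ c : Fin 2, ∀ x ∈ s, v x c = evalFn (p c) x) {x : E2} (hx : x ∈ s)
    (u : E2) (c' : Fin 2) :
    fderivWithin ℝ v s x u c' = ∑ c : Fin 2, evalFn (pderiv c (p c')) x * u c := by
  classical
  set F : E2 →L[ℝ] E2 :=
    ((EuclideanSpace.equiv (Fin 2) ℝ).symm : (Fin 2 → ℝ) →L[ℝ] E2).comp
      (ContinuousLinearMap.pi fun c'' => gradCLM (p c'') x) with hF
  have hFa : ∀ (u : E2) (c'' : Fin 2), F u c'' = gradCLM (p c'') x u := by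
    intro u c''
    simp [hF]
  have hdw : HasFDerivWithinAt v F s x := by
    rw [hasFDerivWithinAt_euclidean]
    intro i
    have h1 : HasFDerivWithinAt (fun y => v y i) (gradCLM (p i) x) s x :=
      ((hasFDerivAt_evalFn (p i) x).hasFDerivWithinAt).congr
        (fun y hy => (hv i y hy)) (hv i x hx)
    have h2 : (PiLp.proj 2 (fun _ : Fin 2 => ℝ) i).comp F = gradCLM (p i) x := by
      ext u
      simp [hFa]
    rw [show (PiLp.proj 2 (fun _ : Fin 2 => ℝ) i) ∘L F = gradCLM (p i) x from h2]
    exact h1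
  rw [hdw.fderivWithin (hs x hx), hFa, gradCLM_apply]

/-! ### existence of the L² projection onto polynomials on an edge -/

lemma exists_l2proj (d : ℕ) {E : Set E2} (hE : MeasurableSet E) (hc : IsCompact E)
    [IsFiniteMeasure (μH[1].restrict E)] {f : E2 → ℝ} (hf : MemLp f 2 (μH[1].restrict E)) :
    ∃ g : E2 → ℝ, IsPolyOn d E g ∧
      ∀ q : E2 → ℝ, IsPolyOn d E q → ∫ x in E, (f x - g x) * q x ∂μH[1] = 0 := by
  classical
  set μ := μH[1].restrict E with hμ
  haveI : Fact ((1:ENNReal) ≤ 2) := ⟨one_le_two⟩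
  have memP : ∀ p : MvPolynomial (Fin 2) ℝ, MemLp (evalFn p) 2 μ := fun p =>
    memL2_of_cont hE hc (continuous_evalFn p)
  set M := MvPolynomial.restrictTotalDegree (Fin 2) ℝ d with hM
  set L : M →ₗ[ℝ] Lp ℝ 2 μ :=
    { toFun := fun P => (memP P.1).toLp (evalFn P.1)
      map_add' := by
        intro P Q
        have h : evalFn ((P + Q : M) : MvPolynomial (Fin 2) ℝ) = evalFn P.1 + evalFn Q.1 := by
          rw [Submodule.coe_add, evalFn_add]
        simp only [h]
        exact MemLp.toLp_add _ _
      map_smul' := by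
        intro c P
        have h : evalFn ((c • P : M) : MvPolynomial (Fin 2) ℝ) = c • evalFn P.1 := by
          funext y
          simp [evalFn, MvPolynomial.smul_eval]
        simp only [h, RingHom.id_apply]
        exact MemLp.toLp_const_smul _ _ } with hL
  set W := LinearMap.range L with hW
  haveI : FiniteDimensional ℝ W := inferInstance
  haveI : CompleteSpace W := FiniteDimensional.complete ℝ W
  set fL := hf.toLp f with hfL
  set g0 := W.orthogonalProjectionOnto fL with hg0
  obtain ⟨P, hP⟩ := LinearMap.mem_range.1 g0.2
  refine ⟨evalFn P.1, ⟨P.1, (MvPolynomial.mem_restrictTotalDegree _ _ _).1 P.2,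
    fun x _ => rfl⟩, ?_⟩
  intro q hq
  obtain ⟨Q, hQd, hQe⟩ := hq
  have hQM : Q ∈ M := (MvPolynomial.mem_restrictTotalDegree _ _ _).2 hQd
  have horth : ⟪fL - (g0 : Lp ℝ 2 μ), L ⟨Q, hQM⟩⟫ = 0 :=
    Submodule.starProjection_inner_eq_zero (K := W) fL _ (LinearMap.mem_range_self _ _)
  rw [MeasureTheory.L2.inner_def] at horth
  have h1 : ⇑(fL - (g0 : Lp ℝ 2 μ)) =ᵐ[μ] fun x => f x - evalFn P.1 x := by
    have e1 : ⇑(fL - (g0 : Lp ℝ 2 μ)) =ᵐ[μ] ⇑fL - ⇑(g0 : Lp ℝ 2 μ) := Lp.coeFn_sub _ _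
    have e2 : ⇑fL =ᵐ[μ] f := hf.coeFn_toLp
    have e3 : ⇑(g0 : Lp ℝ 2 μ) =ᵐ[μ] evalFn P.1 := by
      rw [← hP]; exact (memP P.1).coeFn_toLp
    filter_upwards [e1, e2, e3] with x hx1 hx2 hx3
    rw [hx1, Pi.sub_apply, hx2, hx3]
  have h2 : ⇑(L ⟨Q, hQM⟩) =ᵐ[μ] q := by
    refine ((memP Q).coeFn_toLp).trans ?_
    exact aeR hE fun x hx => (hQe x hx).symm
  have : ∫ x in E, (f x - evalFn P.1 x) * q x ∂μH[1]
      = ∫ x, ⟪(fL - (g0 : Lp ℝ 2 μ)) x, (L ⟨Q, hQM⟩) x⟫ ∂μ := by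
    refine integral_congr_ae ?_
    filter_upwards [h1, h2] with x hx1 hx2
    rw [RCLike.inner_apply, conj_trivial, hx1, hx2, mul_comm]
  rw [this, horth]

lemma edgeProj_spec (K : Tri) (i : Fin 3) (d : ℕ) {f : E2 → ℝ}
    (hf : MemLp f 2 (μH[1].restrict (K.edge i))) :
    IsPolyOn d (K.edge i) (edgeProj d (K.edge i) f) ∧
      ∀ q : E2 → ℝ, IsPolyOn d (K.edge i) q →
        ∫ x in K.edge i, (f x - edgeProj d (K.edge i) f x) * q x ∂μH[1] = 0 := by
  have hex := exists_l2proj d (measurableSet_edge K i) (isCompact_edge K i) hf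
  exact Classical.epsilon_spec hex

end HDG


namespace HDG

open MvPolynomial

lemma young_aux {I a2 b2 N δ : ℝ} (hδ : 0 < δ) (hI : I ≤ Real.sqrt a2 * Real.sqrt b2)
    (ha2 : 0 ≤ a2) (hb2 : 0 ≤ b2) (haN : a2 ≤ N) : 2 * I ≤ δ * N + δ⁻¹ * b2 := by
  have hδδ : Real.sqrt δ * Real.sqrt δ⁻¹ = 1 := by
    rw [Real.sqrt_inv]
    exact mul_inv_cancel₀ (by positivity)
  set a := Real.sqrt a2 with ha
  set b := Real.sqrt b2 with hb
  have ha2' : a ^ 2 = a2 := Real.sq_sqrt ha2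
  have hb2' : b ^ 2 = b2 := Real.sq_sqrt hb2
  have h1 : 2 * (a * b) ≤ δ * a2 + δ⁻¹ * b2 := by
    rw [← ha2', ← hb2']
    have e1 : Real.sqrt δ ^ 2 = δ := Real.sq_sqrt hδ.le
    have e2 : Real.sqrt δ⁻¹ ^ 2 = δ⁻¹ := Real.sq_sqrt (inv_nonneg.2 hδ.le)
    have key : δ * a ^ 2 - 2 * (a * b) + δ⁻¹ * b ^ 2
        = (Real.sqrt δ * a - Real.sqrt δ⁻¹ * b) ^ 2 := by
      calc δ * a ^ 2 - 2 * (a * b) + δ⁻¹ * b ^ 2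
          = Real.sqrt δ ^ 2 * a ^ 2 - 2 * (Real.sqrt δ * Real.sqrt δ⁻¹) * (a * b)
            + Real.sqrt δ⁻¹ ^ 2 * b ^ 2 := by rw [e1, e2, hδδ]; ring
        _ = (Real.sqrt δ * a - Real.sqrt δ⁻¹ * b) ^ 2 := by ring
    linarith [sq_nonneg (Real.sqrt δ * a - Real.sqrt δ⁻¹ * b), key]
  have h2 : δ * a2 ≤ δ * N := mul_le_mul_of_nonneg_left haN hδ.le
  linarith

set_option maxHeartbeats 2000000 in
lemma key_elem (k : ℕ) (ν τ Cmax : ℝ) (hk : 1 ≤ k) (hν : 0 < ν) (hCmax : 0 < Cmax)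
    (hτ : 2 * Cmax ^ 2 < τ) (K : Tri)
    (trace : ∀ f : E2 → ℝ, IsPolyOn k Set.univ f →
      Real.sqrt K.diam * bdryN K f ≤ Cmax * l2N K.toSet f)
    (v : E2 → E2) (hv : IsPolyVecOn k K.toSet v) (vt : E2 → ℝ)
    (hvt : ∀ i : Fin 3, IsPolyOn (k - 1) (Tri.edgeO K i) vt) :
    (min (1 / 2) ((τ - 2 * Cmax ^ 2) / τ) / (1 + Cmax ^ 2)) * ν *
      (sobSemiVecSq 1 K.toSet v
        + K.diam * ∑ i : Fin 3, ∫ x in K.edge i,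
            ‖fderivWithin ℝ v K.toSet x (K.normal i)‖ ^ 2 ∂μH[1]
        + (τ / K.diam) * ∑ i : Fin 3, ∫ x in K.edge i,
            (edgeProj (k - 1) (K.edge i) (fun y => tComp K i v y - vt y) x) ^ 2 ∂μH[1])
    ≤ (∫ x in K.toSet, ν * ∑ c : Fin 2,
          ⟪fderivWithin ℝ v K.toSet x (e2 c), fderivWithin ℝ v K.toSet x (e2 c)⟫)
      - ∑ i : Fin 3, ∫ x in K.edge i, ν * dnt K i v x * (tComp K i v x - vt x) ∂μH[1]
      + (-1 : ℝ) * ∑ i : Fin 3, ∫ x in K.edge i,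
          ν * (tComp K i v x - vt x) * dnt K i v x ∂μH[1]
      + ν * (τ / K.diam) * ∑ i : Fin 3, ∫ x in K.edge i,
          edgeProj (k - 1) (K.edge i) (fun y => tComp K i v y - vt y) x *
            edgeProj (k - 1) (K.edge i) (fun y => tComp K i v y - vt y) x ∂μH[1] := by
  classical
  have hud := uniqueDiffOn_toSet K
  have hsm := measurableSet_toSet K
  have hsc := isCompact_toSet K
  have hd0 := diam_pos K
  have hτ0 : 0 < τ := lt_trans (by positivity) hτ
  choose p hpd hpe using hv
  -- the (global, polynomial) partial derivatives of the components of `v`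
  set Dw : Fin 2 → Fin 2 → E2 → ℝ := fun c c' => evalFn (pderiv c (p c')) with hDw
  have hDwc : ∀ c c', Continuous (Dw c c') := fun c c' => continuous_evalFn _
  have he2 : ∀ (c cc : Fin 2), (e2 c : E2) cc = if c = cc then 1 else 0 := by
    intro c cc; simp [e2, EuclideanSpace.single_apply, eq_comm]
  have hval : ∀ x ∈ K.toSet, ∀ (u : E2) (c' : Fin 2),
      fderivWithin ℝ v K.toSet x u c' = ∑ c : Fin 2, Dw c c' x * u c := fun x hx u c' =>
    fderivWithin_vec hud (fun c y hy => hpe c y hy) hx u c'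
  -- scalar derivatives
  have hdWi : ∀ (c c' : Fin 2), ∀ x ∈ K.toSet, dWi K.toSet c (fun y => v y c') x = Dw c c' x := by
    intro c c' x hx
    have h := fderivWithin_evalFn hud (hpe c') hx
    rw [dWi, h, gradCLM_apply]
    simp [he2, mul_ite, mul_one, mul_zero, Finset.sum_ite_eq, hDw]
  -- integrability helpers
  have intS : ∀ g : E2 → ℝ, Continuous g → IntegrableOn g K.toSet volume := fun g hg =>
    hg.continuousOn.integrableOn_compact hsc
  have memE : ∀ (i : Fin 3) (g : E2 → ℝ), Continuous g →
      MemLp g 2 (μH[1].restrict (K.edge i)) := fun i g hg =>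
    memL2_of_cont (measurableSet_edge K i) (isCompact_edge K i) hg
  have intE : ∀ (i : Fin 3) (g : E2 → ℝ), Continuous g →
      Integrable g (μH[1].restrict (K.edge i)) := fun i g hg =>
    integrable_of_memL2 (memE i g hg)
  -- `A` : the H¹ seminorm squared
  set A : ℝ := ∑ c' : Fin 2, ∑ c : Fin 2, ∫ x in K.toSet, (Dw c c' x) ^ 2 with hA
  have hA0 : 0 ≤ A := Finset.sum_nonneg fun c' _ => Finset.sum_nonneg fun c _ =>
    integral_nonneg fun x => sq_nonneg _
  have hA_eq : sobSemiVecSq 1 K.toSet v = A := by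
    rw [sobSemiVecSq, hA]
    refine Finset.sum_congr rfl fun c' _ => ?_
    rw [sobSemiSq]
    rw [Finset.sum_range_succ, Finset.sum_range_succ, Finset.sum_range_zero, zero_add]
    have e0 : ∫ x in K.toSet, (pderivW K.toSet 0 (1 - 0) (fun y => v y c') x) ^ 2
        = ∫ x in K.toSet, (Dw 1 c' x) ^ 2 := by
      refine integral_congr_ae (aeR hsm fun x hx => ?_)
      have : pderivW K.toSet 0 (1 - 0) (fun y => v y c') = dWi K.toSet 1 (fun y => v y c') := by
        simp [pderivW]
      rw [this, hdWi 1 c' x hx]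
    have e1 : ∫ x in K.toSet, (pderivW K.toSet 1 (1 - 1) (fun y => v y c') x) ^ 2
        = ∫ x in K.toSet, (Dw 0 c' x) ^ 2 := by
      refine integral_congr_ae (aeR hsm fun x hx => ?_)
      have : pderivW K.toSet 1 (1 - 1) (fun y => v y c') = dWi K.toSet 0 (fun y => v y c') := by
        simp [pderivW]
      rw [this, hdWi 0 c' x hx]
    rw [e0, e1, Fin.sum_univ_two]
    ring
  -- the gradient (volume) term
  have hgrad : (∫ x in K.toSet, ν * ∑ c : Fin 2,
        ⟪fderivWithin ℝ v K.toSet x (e2 c), fderivWithin ℝ v K.toSet x (e2 c)⟫) = ν * A := by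
    have h1 : (∫ x in K.toSet, ν * ∑ c : Fin 2,
          ⟪fderivWithin ℝ v K.toSet x (e2 c), fderivWithin ℝ v K.toSet x (e2 c)⟫)
        = ∫ x in K.toSet, ν * ∑ c : Fin 2, ∑ c' : Fin 2, (Dw c c' x) ^ 2 := by
      refine integral_congr_ae (aeR hsm fun x hx => ?_)
      congr 1
      refine Finset.sum_congr rfl fun c _ => ?_
      simp only [PiLp.inner_apply, RCLike.inner_apply, conj_trivial]
      refine Finset.sum_congr rfl fun c' _ => ?_
      rw [hval x hx (e2 c) c']
      simp [he2, mul_ite, mul_one, mul_zero, Finset.sum_ite_eq]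
      ring
    rw [h1, integral_const_mul]
    congr 1
    rw [integral_finset_sum _ (fun c _ => integrable_finset_sum _
      (fun c' _ => intS (fun x => Dw c c' x ^ 2) ((hDwc c c').pow 2)))]
    have hsplit : ∀ c : Fin 2, ∫ x in K.toSet, ∑ c' : Fin 2, (Dw c c' x) ^ 2
        = ∑ c' : Fin 2, ∫ x in K.toSet, (Dw c c' x) ^ 2 := fun c =>
      integral_finset_sum _ (fun c' _ => intS _ ((hDwc c c').pow 2))
    exact ((Finset.sum_congr rfl fun c _ => hsplit c).trans Finset.sum_comm).trans hA.symm
  -- trace estimates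
  have htr : ∀ c c' : Fin 2,
      K.diam * (∑ i : Fin 3, ∫ x in K.edge i, (Dw c c' x) ^ 2 ∂μH[1])
        ≤ Cmax ^ 2 * ∫ x in K.toSet, (Dw c c' x) ^ 2 := by
    intro c c'
    have hpoly : IsPolyOn k Set.univ (Dw c c') :=
      ⟨pderiv c (p c'), le_trans (totalDegree_pderiv_le _ _ k (hpd c')) (Nat.sub_le k 1),
        fun x _ => rfl⟩
    have h := trace _ hpoly
    have hb0 : 0 ≤ bdrySq K (Dw c c') :=
      Finset.sum_nonneg fun i _ => integral_nonneg fun x => sq_nonneg _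
    have hl0 : 0 ≤ l2Sq K.toSet (Dw c c') := integral_nonneg fun x => sq_nonneg _
    have hsq := mul_self_le_mul_self
      (mul_nonneg (Real.sqrt_nonneg _) (by rw [bdryN]; exact Real.sqrt_nonneg _)) h
    have e1 : (Real.sqrt K.diam * bdryN K (Dw c c')) * (Real.sqrt K.diam * bdryN K (Dw c c'))
        = K.diam * bdrySq K (Dw c c') := by
      rw [bdryN, mul_mul_mul_comm, Real.mul_self_sqrt hd0.le, Real.mul_self_sqrt hb0]
    have e2 : (Cmax * l2N K.toSet (Dw c c')) * (Cmax * l2N K.toSet (Dw c c'))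
        = Cmax ^ 2 * l2Sq K.toSet (Dw c c') := by
      rw [l2N, mul_mul_mul_comm, Real.mul_self_sqrt hl0]; ring
    rw [e1, e2] at hsq
    exact hsq
  -- boundary normal-derivative term
  set ND : Fin 3 → E2 → ℝ :=
    fun i x => ∑ c' : Fin 2, (∑ c : Fin 2, Dw c c' x * K.normal i c) ^ 2 with hND
  have hND_cont : ∀ i, Continuous (ND i) := by
    intro i
    apply continuous_finset_sum
    intro c' _
    exact (continuous_finset_sum _ fun c _ => (hDwc c c').mul continuous_const).pow 2
  have hND0 : ∀ i x, 0 ≤ ND i x := fun i x => Finset.sum_nonneg fun c' _ => sq_nonneg _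
  have hNDpt : ∀ i, ∀ x ∈ K.edge i,
      ‖fderivWithin ℝ v K.toSet x (K.normal i)‖ ^ 2 = ND i x := by
    intro i x hx
    have hx' : x ∈ K.toSet := edge_subset K i hx
    rw [EuclideanSpace.norm_eq, Real.sq_sqrt (by positivity)]
    refine Finset.sum_congr rfl fun c' _ => ?_
    rw [Real.norm_eq_abs, sq_abs, hval x hx' (K.normal i) c']
  have hbeq : ∀ i, ∫ x in K.edge i, ‖fderivWithin ℝ v K.toSet x (K.normal i)‖ ^ 2 ∂μH[1]
      = ∫ x in K.edge i, ND i x ∂μH[1] := fun i =>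
    integral_congr_ae (aeR (measurableSet_edge K i) fun x hx => hNDpt i x hx)
  set Bq : ℝ := ∑ i : Fin 3, ∫ x in K.edge i, ND i x ∂μH[1] with hBq
  have hBq0 : 0 ≤ Bq := Finset.sum_nonneg fun i _ => integral_nonneg fun x => hND0 i x
  have hB_le : K.diam * Bq ≤ Cmax ^ 2 * A := by
    have h1 : ∀ i, ∫ x in K.edge i, ND i x ∂μH[1]
        ≤ ∑ c' : Fin 2, ∑ c : Fin 2, ∫ x in K.edge i, (Dw c c' x) ^ 2 ∂μH[1] := by
      intro i
      have hle : ∀ x, ND i x ≤ ∑ c' : Fin 2, ∑ c : Fin 2, (Dw c c' x) ^ 2 := by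
        intro x
        refine Finset.sum_le_sum fun c' _ => ?_
        have hcs := Finset.sum_mul_sq_le_sq_mul_sq Finset.univ
          (fun c => Dw c c' x) (fun c => K.normal i c)
        rw [sum_sq_normal K i, mul_one] at hcs
        exact hcs
      calc ∫ x in K.edge i, ND i x ∂μH[1]
          ≤ ∫ x in K.edge i, ∑ c' : Fin 2, ∑ c : Fin 2, (Dw c c' x) ^ 2 ∂μH[1] := by
            refine integral_mono_of_nonneg (Filter.Eventually.of_forall fun x => hND0 i x)
              (intE i _ (continuous_finset_sum _ fun c' _ =>
                continuous_finset_sum _ fun c _ => (hDwc c c').pow 2))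
              (Filter.Eventually.of_forall fun x => hle x)
        _ = ∑ c' : Fin 2, ∑ c : Fin 2, ∫ x in K.edge i, (Dw c c' x) ^ 2 ∂μH[1] := by
            rw [integral_finset_sum _ (fun c' _ => integrable_finset_sum _
              (fun c _ => intE i (fun x => Dw c c' x ^ 2) ((hDwc c c').pow 2)))]
            exact Finset.sum_congr rfl fun c' _ =>
              integral_finset_sum _ (fun c _ => intE i _ ((hDwc c c').pow 2))
    have h2 : Bq ≤ ∑ c' : Fin 2, ∑ c : Fin 2,
        ∑ i : Fin 3, ∫ x in K.edge i, (Dw c c' x) ^ 2 ∂μH[1] := by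
      rw [hBq]
      calc ∑ i : Fin 3, ∫ x in K.edge i, ND i x ∂μH[1]
          ≤ ∑ i : Fin 3, ∑ c' : Fin 2, ∑ c : Fin 2,
              ∫ x in K.edge i, (Dw c c' x) ^ 2 ∂μH[1] := Finset.sum_le_sum fun i _ => h1 i
        _ = ∑ c' : Fin 2, ∑ c : Fin 2, ∑ i : Fin 3,
              ∫ x in K.edge i, (Dw c c' x) ^ 2 ∂μH[1] := by
            rw [Finset.sum_comm]
            exact Finset.sum_congr rfl fun c' _ => Finset.sum_comm
    calc K.diam * Bq ≤ K.diam * ∑ c' : Fin 2, ∑ c : Fin 2,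
          ∑ i : Fin 3, ∫ x in K.edge i, (Dw c c' x) ^ 2 ∂μH[1] := by
          exact mul_le_mul_of_nonneg_left h2 hd0.le
      _ = ∑ c' : Fin 2, ∑ c : Fin 2, K.diam *
            ∑ i : Fin 3, ∫ x in K.edge i, (Dw c c' x) ^ 2 ∂μH[1] := by
          rw [Finset.mul_sum]
          exact Finset.sum_congr rfl fun c' _ => Finset.mul_sum _ _ _
      _ ≤ ∑ c' : Fin 2, ∑ c : Fin 2, Cmax ^ 2 * ∫ x in K.toSet, (Dw c c' x) ^ 2 := by
          exact Finset.sum_le_sum fun c' _ => Finset.sum_le_sum fun c _ => htr c c'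
      _ = Cmax ^ 2 * A := by
          rw [hA, Finset.mul_sum]
          exact Finset.sum_congr rfl fun c' _ => (Finset.mul_sum _ _ _).symm
  -- edge projection statements
  have hnullO : ∀ i : Fin 3, μH[1] (K.edge i \ K.edgeO i) = 0 := by
    intro i
    have hsub : K.edge i \ K.edgeO i ⊆ {K.V (i + 1), K.V (i + 2)} := by
      intro x hx
      rcases hx with ⟨hxe, hxo⟩
      by_contra hmem
      exact hxo ⟨hxe, hmem⟩
    refine measure_mono_null hsub ?_
    haveI := MeasureTheory.Measure.noAtoms_hausdorff E2 one_pos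
    exact ((Set.finite_singleton _).insert _).countable.measure_zero _
  have htangent_poly : ∀ i : Fin 3, ∀ x ∈ K.edge i,
      tComp K i v x = evalFn (∑ c' : Fin 2, C (K.tangent i c') * p c') x := by
    intro i x hx
    have hxs : x ∈ K.toSet := edge_subset K i hx
    rw [tComp, PiLp.inner_apply]
    rw [show evalFn (∑ c' : Fin 2, C (K.tangent i c') * p c') x
      = ∑ c' : Fin 2, K.tangent i c' * evalFn (p c') x by simp [evalFn]]
    refine Finset.sum_congr rfl fun c' _ => ?_
    rw [RCLike.inner_apply, conj_trivial]
    rw [show v x c' = evalFn (p c') x from hpe c' x hxs]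
  have hfae : ∀ i : Fin 3, ∃ R : MvPolynomial (Fin 2) ℝ,
      (fun y => tComp K i v y - vt y) =ᵐ[μH[1].restrict (K.edge i)] evalFn R := by
    intro i
    obtain ⟨Q, hQd, hQe⟩ := hvt i
    refine ⟨(∑ c' : Fin 2, C (K.tangent i c') * p c') - Q, ?_⟩
    refine aeR_diff (measurableSet_edge K i) (hnullO i) fun x hxO => ?_
    have hxe : x ∈ K.edge i := hxO.1
    rw [show evalFn ((∑ c' : Fin 2, C (K.tangent i c') * p c') - Q) x
      = evalFn (∑ c' : Fin 2, C (K.tangent i c') * p c') x - evalFn Q x by simp [evalFn]]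
    have h2 : vt x = evalFn Q x := hQe x hxO
    rw [← htangent_poly i x hxe, ← h2]
  have hfmem : ∀ i : Fin 3,
      MemLp (fun y => tComp K i v y - vt y) 2 (μH[1].restrict (K.edge i)) := by
    intro i
    obtain ⟨R, hR⟩ := hfae i
    exact (memLp_congr_ae hR).2 (memE i _ (continuous_evalFn R))
  set Φ : Fin 3 → E2 → ℝ :=
    fun i => edgeProj (k - 1) (K.edge i) (fun y => tComp K i v y - vt y) with hΦ
  have hspec := fun i : Fin 3 => edgeProj_spec K i (k - 1) (hfmem i)
  have hΦae : ∀ i : Fin 3, ∃ G : MvPolynomial (Fin 2) ℝ,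
      Φ i =ᵐ[μH[1].restrict (K.edge i)] evalFn G := by
    intro i
    obtain ⟨G, _, hGe⟩ := (hspec i).1
    exact ⟨G, aeR (measurableSet_edge K i) hGe⟩
  have hΦmem : ∀ i : Fin 3, MemLp (Φ i) 2 (μH[1].restrict (K.edge i)) := by
    intro i
    obtain ⟨G, hG⟩ := hΦae i
    exact (memLp_congr_ae hG).2 (memE i _ (continuous_evalFn G))
  -- dnt is a polynomial of degree ≤ k-1 on each edge
  have hdnt_poly : ∀ i : Fin 3, IsPolyOn (k - 1) (K.edge i) (dnt K i v) := by
    intro i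
    refine ⟨∑ c' : Fin 2, ∑ c : Fin 2, C (K.tangent i c' * K.normal i c) * pderiv c (p c'),
      ?_, ?_⟩
    · refine (MvPolynomial.totalDegree_finset_sum _ _).trans (Finset.sup_le fun c' _ => ?_)
      refine (MvPolynomial.totalDegree_finset_sum _ _).trans (Finset.sup_le fun c _ => ?_)
      refine (MvPolynomial.totalDegree_mul _ _).trans ?_
      simp only [MvPolynomial.totalDegree_C, zero_add]
      exact totalDegree_pderiv_le _ _ k (hpd c')
    · intro x hx
      have hxs : x ∈ K.toSet := edge_subset K i hx
      rw [dnt, PiLp.inner_apply]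
      rw [show (eval fun j => x j) (∑ c' : Fin 2, ∑ c : Fin 2,
            C (K.tangent i c' * K.normal i c) * pderiv c (p c'))
          = ∑ c' : Fin 2, ∑ c : Fin 2, K.tangent i c' * K.normal i c * Dw c c' x by
        simp [evalFn, hDw]]
      refine Finset.sum_congr rfl fun c' _ => ?_
      rw [RCLike.inner_apply, conj_trivial, hval x hxs (K.normal i) c', Finset.mul_sum]
      exact Finset.sum_congr rfl fun c _ => by ring
  have hdnt_mem : ∀ i : Fin 3, MemLp (dnt K i v) 2 (μH[1].restrict (K.edge i)) := by
    intro i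
    obtain ⟨D, _, hDe⟩ := hdnt_poly i
    refine (memLp_congr_ae (aeR (measurableSet_edge K i) hDe)).2
      (memE i _ (continuous_evalFn D))
  have hint_mul : ∀ (i : Fin 3) (a b : E2 → ℝ), MemLp a 2 (μH[1].restrict (K.edge i)) →
      MemLp b 2 (μH[1].restrict (K.edge i)) →
      Integrable (fun x => a x * b x) (μH[1].restrict (K.edge i)) := by
    intro i a b ha hb
    haveI : Fact ((1:ENNReal) ≤ 2) := ⟨one_le_two⟩
    refine (MeasureTheory.L2.integrable_inner (𝕜 := ℝ) (ha.toLp a) (hb.toLp b)).congr ?_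
    filter_upwards [ha.coeFn_toLp, hb.coeFn_toLp] with x h1 h2
    rw [RCLike.inner_apply, conj_trivial, h1, h2, mul_comm]
  -- the cross term: projection orthogonality
  have hcross_eq : ∀ i : Fin 3,
      ∫ x in K.edge i, dnt K i v x * (tComp K i v x - vt x) ∂μH[1]
        = ∫ x in K.edge i, dnt K i v x * Φ i x ∂μH[1] := by
    intro i
    have horth := (hspec i).2 (dnt K i v) (hdnt_poly i)
    have h1 : Integrable (fun x => (tComp K i v x - vt x) * dnt K i v x)
        (μH[1].restrict (K.edge i)) := hint_mul i _ _ (hfmem i) (hdnt_mem i)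
    have h2 : Integrable (fun x => Φ i x * dnt K i v x)
        (μH[1].restrict (K.edge i)) := hint_mul i _ _ (hΦmem i) (hdnt_mem i)
    have h3 : ∫ x in K.edge i, ((tComp K i v x - vt x) - Φ i x) * dnt K i v x ∂μH[1]
        = (∫ x in K.edge i, (tComp K i v x - vt x) * dnt K i v x ∂μH[1])
          - ∫ x in K.edge i, Φ i x * dnt K i v x ∂μH[1] := by
      rw [← integral_sub h1 h2]
      exact integral_congr_ae (Filter.Eventually.of_forall fun x => by ring)
    rw [horth] at h3
    have h4 : ∫ x in K.edge i, (tComp K i v x - vt x) * dnt K i v x ∂μH[1]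
        = ∫ x in K.edge i, Φ i x * dnt K i v x ∂μH[1] := by linarith
    calc ∫ x in K.edge i, dnt K i v x * (tComp K i v x - vt x) ∂μH[1]
        = ∫ x in K.edge i, (tComp K i v x - vt x) * dnt K i v x ∂μH[1] :=
          integral_congr_ae (Filter.Eventually.of_forall fun x => by ring)
      _ = ∫ x in K.edge i, Φ i x * dnt K i v x ∂μH[1] := h4
      _ = ∫ x in K.edge i, dnt K i v x * Φ i x ∂μH[1] :=
          integral_congr_ae (Filter.Eventually.of_forall fun x => by ring)
  -- Cauchy-Schwarz and Young
  set δ : ℝ := K.diam / (2 * Cmax ^ 2) with hδdef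
  have hδ0 : 0 < δ := by positivity
  have hsi0 : ∀ i : Fin 3, (0:ℝ) ≤ ∫ x in K.edge i, (Φ i x) ^ 2 ∂μH[1] := fun i =>
    integral_nonneg fun x => sq_nonneg _
  have hcs : ∀ i : Fin 3, 2 * ∫ x in K.edge i, dnt K i v x * Φ i x ∂μH[1]
      ≤ δ * (∫ x in K.edge i, ND i x ∂μH[1])
        + δ⁻¹ * ∫ x in K.edge i, (Φ i x) ^ 2 ∂μH[1] := by
    intro i
    have h1 := l2_CS (hdnt_mem i) (hΦmem i)
    have h2 : ∫ x in K.edge i, (dnt K i v x) ^ 2 ∂μH[1]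
        ≤ ∫ x in K.edge i, ND i x ∂μH[1] := by
      refine integral_mono_of_nonneg (Filter.Eventually.of_forall fun x => sq_nonneg _)
        (intE i _ (hND_cont i)) ?_
      refine (ae_restrict_iff' (measurableSet_edge K i)).2
        (MeasureTheory.ae_of_all _ fun x hx => ?_)
      have h3 := abs_real_inner_le_norm (fderivWithin ℝ v K.toSet x (K.normal i)) (K.tangent i)
      rw [norm_tangent, mul_one] at h3
      have h4 : (dnt K i v x) ^ 2 ≤ ‖fderivWithin ℝ v K.toSet x (K.normal i)‖ ^ 2 := by
        rw [dnt]
        nlinarith [abs_nonneg (⟪fderivWithin ℝ v K.toSet x (K.normal i), K.tangent i⟫),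
          sq_abs (⟪fderivWithin ℝ v K.toSet x (K.normal i), K.tangent i⟫)]
      rw [hNDpt i x hx] at h4
      exact h4
    have ha2 : (0:ℝ) ≤ ∫ x in K.edge i, (dnt K i v x) ^ 2 ∂μH[1] :=
      integral_nonneg fun x => sq_nonneg _
    exact young_aux hδ0 h1 ha2 (hsi0 i) h2
  -- global sums
  set S : ℝ := ∑ i : Fin 3, ∫ x in K.edge i, (Φ i x) ^ 2 ∂μH[1] with hSdef
  have hS0 : 0 ≤ S := Finset.sum_nonneg fun i _ => hsi0 i
  set Ct : ℝ := ∑ i : Fin 3, ∫ x in K.edge i, dnt K i v x * Φ i x ∂μH[1] with hCtdef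
  have hCtb : 2 * Ct ≤ δ * Bq + δ⁻¹ * S := by
    calc 2 * Ct = ∑ i : Fin 3, 2 * ∫ x in K.edge i, dnt K i v x * Φ i x ∂μH[1] := by
          rw [hCtdef, Finset.mul_sum]
      _ ≤ ∑ i : Fin 3, (δ * (∫ x in K.edge i, ND i x ∂μH[1])
            + δ⁻¹ * ∫ x in K.edge i, (Φ i x) ^ 2 ∂μH[1]) := Finset.sum_le_sum fun i _ => hcs i
      _ = δ * Bq + δ⁻¹ * S := by
          rw [Finset.sum_add_distrib, ← Finset.mul_sum, ← Finset.mul_sum, hBq, hSdef]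
  -- rewrite goal
  have hsumB : (∑ i : Fin 3, ∫ x in K.edge i,
      ‖fderivWithin ℝ v K.toSet x (K.normal i)‖ ^ 2 ∂μH[1]) = Bq := by
    rw [hBq]; exact Finset.sum_congr rfl fun i _ => hbeq i
  have hsumS2 : (∑ i : Fin 3, ∫ x in K.edge i,
      edgeProj (k - 1) (K.edge i) (fun y => tComp K i v y - vt y) x *
        edgeProj (k - 1) (K.edge i) (fun y => tComp K i v y - vt y) x ∂μH[1]) = S := by
    rw [hSdef]
    refine Finset.sum_congr rfl fun i _ => ?_
    exact integral_congr_ae (Filter.Eventually.of_forall fun x => (sq (Φ i x)).symm)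
  have hcr1 : (∑ i : Fin 3, ∫ x in K.edge i,
      ν * dnt K i v x * (tComp K i v x - vt x) ∂μH[1]) = ν * Ct := by
    rw [hCtdef, Finset.mul_sum]
    refine Finset.sum_congr rfl fun i _ => ?_
    rw [← hcross_eq i, ← integral_const_mul]
    exact integral_congr_ae (Filter.Eventually.of_forall fun x => by ring)
  have hcr2 : (∑ i : Fin 3, ∫ x in K.edge i,
      ν * (tComp K i v x - vt x) * dnt K i v x ∂μH[1]) = ν * Ct := by
    rw [hCtdef, Finset.mul_sum]
    refine Finset.sum_congr rfl fun i _ => ?_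
    rw [← hcross_eq i, ← integral_const_mul]
    exact integral_congr_ae (Filter.Eventually.of_forall fun x => by ring)
  rw [hA_eq, hsumB, hsumS2, hcr1, hcr2, hgrad]
  -- purely numeric finish
  set m : ℝ := min (1 / 2) ((τ - 2 * Cmax ^ 2) / τ) with hmdef
  have hm1 : m ≤ 1 / 2 := min_le_left _ _
  have hm2 : m ≤ (τ - 2 * Cmax ^ 2) / τ := min_le_right _ _
  have hm0 : 0 ≤ m := le_min (by norm_num) (div_nonneg (by linarith) hτ0.le)
  have hC2 : (0:ℝ) < 1 + Cmax ^ 2 := by positivity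
  have e2 : δ⁻¹ = 2 * Cmax ^ 2 / K.diam := by rw [hδdef, inv_div]
  have e1 : δ * Bq ≤ A / 2 := by
    have h1 : δ * Bq = K.diam * Bq / (2 * Cmax ^ 2) := by rw [hδdef]; ring
    rw [h1]
    have h2 : K.diam * Bq / (2 * Cmax ^ 2) ≤ Cmax ^ 2 * A / (2 * Cmax ^ 2) :=
      div_le_div_of_nonneg_right hB_le (by positivity)
    refine h2.trans (le_of_eq ?_)
    field_simp
  rw [e2] at hCtb
  have h3 : 2 * Ct ≤ A / 2 + 2 * Cmax ^ 2 / K.diam * S := by linarith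
  have key : m / (1 + Cmax ^ 2) * (A + K.diam * Bq + τ / K.diam * S)
      ≤ A - 2 * Ct + τ / K.diam * S := by
    have l1 : A + K.diam * Bq + τ / K.diam * S ≤ (1 + Cmax ^ 2) * A + τ / K.diam * S := by
      nlinarith [hB_le]
    have l2 : m / (1 + Cmax ^ 2) * ((1 + Cmax ^ 2) * A + τ / K.diam * S)
        = m * A + m / (1 + Cmax ^ 2) * (τ / K.diam * S) := by
      field_simp
    have l3 : m / (1 + Cmax ^ 2) * (A + K.diam * Bq + τ / K.diam * S)
        ≤ m * A + m / (1 + Cmax ^ 2) * (τ / K.diam * S) := by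
      rw [← l2]
      exact mul_le_mul_of_nonneg_left l1 (div_nonneg hm0 hC2.le)
    have l4 : m / (1 + Cmax ^ 2) ≤ m := by
      apply div_le_self hm0
      nlinarith [sq_nonneg Cmax]
    have lS : 0 ≤ τ / K.diam * S := mul_nonneg (div_nonneg hτ0.le hd0.le) hS0
    have l5 : m * A ≤ A / 2 := by nlinarith [mul_le_mul_of_nonneg_right hm1 hA0]
    have l6 : m / (1 + Cmax ^ 2) * (τ / K.diam * S) ≤ m * (τ / K.diam * S) :=
      mul_le_mul_of_nonneg_right l4 lS
    have l7 : m * (τ / K.diam * S) ≤ (τ - 2 * Cmax ^ 2) / K.diam * S := by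
      have h5 : m * τ ≤ τ - 2 * Cmax ^ 2 := (le_div_iff₀ hτ0).1 hm2
      have h7 : m * (τ / K.diam) ≤ (τ - 2 * Cmax ^ 2) / K.diam := by
        rw [div_eq_mul_inv, div_eq_mul_inv, ← mul_assoc]
        exact mul_le_mul_of_nonneg_right h5 (by positivity)
      calc m * (τ / K.diam * S) = m * (τ / K.diam) * S := by ring
        _ ≤ (τ - 2 * Cmax ^ 2) / K.diam * S := mul_le_mul_of_nonneg_right h7 hS0
    have h9 : (τ - 2 * Cmax ^ 2) / K.diam * S
        = τ / K.diam * S - 2 * Cmax ^ 2 / K.diam * S := by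
      rw [sub_div]; ring
    linarith
  have hfin := mul_le_mul_of_nonneg_left key hν.le
  nlinarith [hfin]

end HDG


/-- Lemma 4, case `ε = -1`: ellipticity of `a` for `τ` large. If
`ε = -1` and `τ > 2 C_max²`, then `a` is elliptic on `V_h`: with
`C = min {1/2, (τ - 2C_max²)/τ}` and `α = C/(1 + C_max²)`,
`a((v_h, ṽ_h), (v_h, ṽ_h)) ≥ α |||(v_h, ṽ_h)|||²` for all `(v_h, ṽ_h) ∈ V_h`. -/
theorem ellipticity_symmetric (M : Mesh) (k : ℕ) (hk : 1 ≤ k) (ν τ : ℝ)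
    (hν : 0 < ν) (Cmax : ℝ) (hC : TraceConst M k Cmax) (hτ : 2 * Cmax ^ 2 < τ)
    (v : Vb) (vt : E2 → ℝ) (hv : MemBDM M k v) (hvt : MemM0 M (k - 1) vt) :
    (min (1 / 2) ((τ - 2 * Cmax ^ 2) / τ) / (1 + Cmax ^ 2)) * tnormSq M k ν τ v vt
      ≤ aForm M k ν τ (-1) v vt v vt := by
  rw [tnormSq, aForm, Finset.mul_sum, Finset.mul_sum]
  refine Finset.sum_le_sum fun K hK => ?_
  rw [← mul_assoc]
  exact HDG.key_elem k ν τ Cmax hk hν hC.1 hτ K (fun f hf => hC.2 K hK f hf)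
    (v K) (hv.1 K hK) vt (fun i => hvt.1 K hK i)


end
end
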